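/- arXiv:2003.04029 — 9 statements merged into one kernel-verified Lean document; each statement's English description precedes it below -/
import Mathlib

section
/- Let p ≥ 3 and q be distinct primes, and let F be the n-th layer of the cyclotomic Z_p-extension of Q (the unique subfield of Q(ζ_{p^{n+1}}) of degree p^n over Q). Then q is inert in F if and only if q^(p-1) ≢ 1 (mod p²). -/
open NumberField FractionalIdeal IsDedekindDomain

open Polynomial in
/-- In a field, if every element satisfies `x ^ N = x` with `N ≥ 2`, then the field has
at most `N` elements. -/
private lemma aux_card_le_of_pow_eq {k : Type*} [Field k] {N : ℕ} (hN : 2 ≤ N)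
    (h : ∀ x : k, x ^ N = x) : Nat.card k ≤ N := by
  set f : k[X] := X ^ N - X with hf
  have hdeg : f.natDegree = N := by
    rw [hf]
    rw [natDegree_sub_eq_left_of_natDegree_lt (by simp [natDegree_X_pow]; omega)]
    simp
  have hne : f ≠ 0 := by
    intro h0
    rw [h0] at hdeg
    simp at hdeg
    omega
  have hroot : ∀ x : k, f.IsRoot x := by
    intro x
    simp only [IsRoot, hf, eval_sub, eval_pow, eval_X]
    rw [h x, sub_self]
  have hfin : (Set.univ : Set k).Finite := by
    have : (Set.univ : Set k) = {x | f.IsRoot x} := by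
      ext x; simpa using (hroot x)
    rw [this]
    exact f.finite_setOf_isRoot hne
  have : Finite k := Set.finite_univ_iff.mp hfin
  have := Fintype.ofFinite k
  classical
  rw [Nat.card_eq_fintype_card]
  have hsub : Finset.univ ⊆ f.roots.toFinset := by
    intro x _
    rw [Multiset.mem_toFinset, mem_roots hne]
    exact hroot x
  calc Fintype.card k = Finset.univ.card := rfl
    _ ≤ f.roots.toFinset.card := Finset.card_le_card hsub
    _ ≤ Multiset.card f.roots := Multiset.toFinset_card_le _
    _ ≤ f.natDegree := f.card_roots' 
    _ = N := hdeg

/-- The cardinality of `𝓞 L / (q)` is `q ^ [L : ℚ]`. -/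
private lemma aux_card_quot (L : Type*) [Field L] [NumberField L] (q : ℕ) :
    Nat.card ((𝓞 L) ⧸ (Ideal.span {(q : 𝓞 L)} : Ideal (𝓞 L))) = q ^ (Module.finrank ℚ L) := by
  have h1 : (q : 𝓞 L) = algebraMap ℤ (𝓞 L) (q : ℤ) := by
    simp
  rw [← Submodule.cardQuot_apply, ← Ideal.absNorm_apply, h1, Ideal.absNorm_span_singleton]
  rw [Algebra.norm_algebraMap_of_basis (Module.Free.chooseBasis ℤ (𝓞 L)),
    ← Module.finrank_eq_card_chooseBasisIndex, NumberField.RingOfIntegers.rank]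
  rw [Int.natAbs_pow, Int.natAbs_natCast]

/-- LTE consequence A : if `q^(p-1) ≡ 1 mod p²` then `q^((p-1)p^(n-1)) ≡ 1 mod p^(n+1)`. -/
private lemma aux_ntA {p q n : ℕ} (hp : p.Prime) (hp3 : 3 ≤ p) (hn : 1 ≤ n)
    (hpq : ¬ (p : ℤ) ∣ (q : ℤ))
    (h : (p : ℤ) ^ 2 ∣ (q : ℤ) ^ (p - 1) - 1) :
    (p : ℤ) ^ (n + 1) ∣ (q : ℤ) ^ ((p - 1) * p ^ (n - 1)) - 1 := by
  have hodd : Odd p := hp.odd_of_ne_two (by omega)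
  set x : ℤ := (q : ℤ) ^ (p - 1) with hx
  have hxy : (p : ℤ) ∣ x - 1 := dvd_trans (dvd_pow_self (p : ℤ) (two_ne_zero)) h
  have hxd : ¬ (p : ℤ) ∣ x := by
    intro hd
    exact hpq ((Nat.prime_iff_prime_int.mp hp).dvd_of_dvd_pow hd)
  have key := Int.emultiplicity_pow_sub_pow hp hodd hxy hxd (p ^ (n - 1))
  rw [one_pow] at key
  have h2 : (2 : ℕ∞) ≤ emultiplicity ((p : ℤ)) (x - 1) := by
    exact_mod_cast le_emultiplicity_of_pow_dvd h
  have h3 : emultiplicity p (p ^ (n - 1)) = ((n - 1 : ℕ) : ℕ∞) :=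
    emultiplicity_pow_self hp.ne_zero hp.prime.not_unit _
  apply pow_dvd_of_le_emultiplicity
  rw [pow_mul, ← hx, key, h3]
  have hcast : ((n + 1 : ℕ) : ℕ∞) = (2 : ℕ∞) + ((n - 1 : ℕ) : ℕ∞) := by
    rw [show n + 1 = 2 + (n - 1) from by omega, Nat.cast_add]
    norm_num
  rw [hcast]
  exact add_le_add_left h2 _

/-- LTE consequence B : if `q^(p-1) ≢ 1 mod p²` and `q^f ≡ 1 mod p^(n+1)` then `p^n ∣ f`. -/
private lemma aux_ntB {p q n f : ℕ} (hp : p.Prime) (hp3 : 3 ≤ p)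
    (hpq : ¬ (p : ℤ) ∣ (q : ℤ))
    (hferm : (p : ℤ) ∣ (q : ℤ) ^ (p - 1) - 1)
    (h2 : ¬ (p : ℤ) ^ 2 ∣ (q : ℤ) ^ (p - 1) - 1)
    (hf : (p : ℤ) ^ (n + 1) ∣ (q : ℤ) ^ f - 1) : p ^ n ∣ f := by
  have hodd : Odd p := hp.odd_of_ne_two (by omega)
  set x : ℤ := (q : ℤ) ^ (p - 1) with hx
  have hxd : ¬ (p : ℤ) ∣ x := by
    intro hd
    exact hpq ((Nat.prime_iff_prime_int.mp hp).dvd_of_dvd_pow hd)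
  have key := Int.emultiplicity_pow_sub_pow hp hodd hferm hxd f
  rw [one_pow] at key
  have hdvd : (p : ℤ) ^ (n + 1) ∣ x ^ f - 1 := by
    refine dvd_trans hf ?_
    have : x ^ f = ((q : ℤ) ^ f) ^ (p - 1) := by
      rw [hx, ← pow_mul, ← pow_mul, mul_comm]
    rw [this]
    have := sub_dvd_pow_sub_pow ((q : ℤ) ^ f) 1 (p - 1)
    rwa [one_pow] at this
  have hle : ((n + 1 : ℕ) : ℕ∞) ≤ emultiplicity ((p:ℤ)) (x - 1) + emultiplicity p f := by
    rw [← key]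
    exact le_emultiplicity_of_pow_dvd hdvd
  have hx1 : emultiplicity ((p:ℤ)) (x - 1) ≤ 1 := by
    by_contra hcon
    have h1lt : (1 : ℕ∞) < emultiplicity ((p:ℤ)) (x - 1) := not_le.mp hcon
    have : ((2:ℕ) : ℕ∞) ≤ emultiplicity ((p:ℤ)) (x - 1) := by
      rw [show ((2:ℕ) : ℕ∞) = (1 : ℕ∞) + 1 by rfl]
      exact Order.add_one_le_of_lt h1lt
    exact h2 (by exact_mod_cast pow_dvd_of_le_emultiplicity this)
  have hfin : ((n : ℕ) : ℕ∞) ≤ emultiplicity p f := by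
    have step : ((n + 1 : ℕ) : ℕ∞) ≤ 1 + emultiplicity p f :=
      le_trans hle (add_le_add_left hx1 _)
    have hrw : ((n + 1 : ℕ) : ℕ∞) = 1 + ((n : ℕ) : ℕ∞) := by
      rw [add_comm 1]
      push_cast
      rfl
    rw [hrw] at step
    exact (ENat.add_le_add_iff_left (by simp)).mp step
  exact pow_dvd_of_le_emultiplicity hfin


set_option maxHeartbeats 1000000 in
set_option synthInstance.maxHeartbeats 400000 in
/-- Let p ≥ 3 and q be distinct primes, F the n-th layer of the cyclotomic
Z_p-extension of ℚ (the subfield of ℚ(ζ_{p^{n+1}}) of degree p^n over ℚ).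
Then q is inert in F iff q^(p-1) ≢ 1 (mod p²). -/
theorem stmt0 (p q n : ℕ) (hp : p.Prime) (hq : q.Prime) (hp3 : 3 ≤ p) (hpq : p ≠ q)
    (hn : 1 ≤ n)
    (K : Type*) [Field K] [CharZero K] (m : ℕ+) (hm : (m : ℕ) = p ^ (n + 1))
    [IsCyclotomicExtension {(m : ℕ)} ℚ K]
    (F : IntermediateField ℚ K) (hF : Module.finrank ℚ F = p ^ n) :
    (Ideal.span {(q : 𝓞 F)}).IsPrime ↔ ¬ ((q : ZMod (p ^ 2)) ^ (p - 1) = 1) := by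
  classical
  haveI hfact : Fact p.Prime := ⟨hp⟩
  haveI hfactq : Fact q.Prime := ⟨hq⟩
  set Pp : ℕ+ := ⟨p, hp.pos⟩ with hPp
  have hmP : m = Pp ^ (n + 1) := by
    apply PNat.coe_injective
    rw [hm, PNat.pow_coe]
    rfl
  subst hmP
  haveI : NumberField K := IsCyclotomicExtension.numberField {((Pp ^ (n + 1) : ℕ+) : ℕ)} ℚ K
  haveI : FiniteDimensional ℚ F := FiniteDimensional.left ℚ F K
  haveI : NumberField F := ⟨⟩
  -- degrees
  set M := p ^ (n + 1) with hM
  have hMcoe : ((Pp ^ (n + 1) : ℕ+) : ℕ) = M := by rw [PNat.pow_coe]; rfl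
  have hMpos : 0 < M := by positivity
  have htot : Module.finrank ℚ K = p ^ n * (p - 1) := by
    rw [IsCyclotomicExtension.finrank (n := ((Pp ^ (n + 1) : ℕ+) : ℕ)) K
      (Polynomial.cyclotomic.irreducible_rat (by rw [hMcoe]; positivity))]
    rw [hMcoe, hM, Nat.totient_prime_pow hp (by omega), Nat.add_sub_cancel]
  have hFK : Module.finrank F K = p - 1 := by
    have hmul := Module.finrank_mul_finrank ℚ F K
    rw [hF, htot] at hmul
    exact Nat.eq_of_mul_eq_mul_left (by positivity) hmul
  -- the primitive root
  have hζ := IsCyclotomicExtension.zeta_spec ((Pp ^ (n + 1) : ℕ+) : ℕ) ℚ K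
  set ζ := IsCyclotomicExtension.zeta ((Pp ^ (n + 1) : ℕ+) : ℕ) ℚ K with hζdef
  set z : 𝓞 K := hζ.toInteger with hzdef
  have hzprim : IsPrimitiveRoot z M := hMcoe ▸ hζ.toInteger_isPrimitiveRoot
  haveI : Fact (Nat.Prime ((Pp : ℕ+) : ℕ)) := ⟨hp⟩
  have hadj : Algebra.adjoin ℤ {z} = ⊤ := by
    have h1 := hζ.integralPowerBasis.adjoin_gen_eq_top
    rwa [hζ.integralPowerBasis_gen] at h1
  -- basic arithmetic facts
  have hq2 : 2 ≤ q := hq.two_le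
  have hpn1 : 1 ≤ p ^ n := Nat.one_le_pow _ _ hp.pos
  have hpdvdq : ¬ p ∣ q := fun h => hpq ((Nat.prime_dvd_prime_iff_eq hp hq).mp h)
  have hpdvdqZ : ¬ (p : ℤ) ∣ (q : ℤ) := by
    rw [Int.natCast_dvd_natCast]
    exact hpdvdq
  have hferm : (p : ℤ) ∣ (q : ℤ) ^ (p - 1) - 1 := by
    have hq0 : (q : ZMod p) ≠ 0 := by
      rw [Ne, ZMod.natCast_eq_zero_iff]
      exact hpdvdq
    have h1 : (q : ZMod p) ^ (p - 1) = 1 := ZMod.pow_card_sub_one_eq_one hq0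
    have h2 := (ZMod.intCast_zmod_eq_zero_iff_dvd ((q : ℤ) ^ (p - 1) - 1) p).mp (by
      push_cast
      rw [h1, sub_self])
    exact_mod_cast h2
  have hiff : ((q : ZMod (p ^ 2)) ^ (p - 1) = 1) ↔ (p : ℤ) ^ 2 ∣ (q : ℤ) ^ (p - 1) - 1 := by
    have h1 := ZMod.intCast_zmod_eq_zero_iff_dvd ((q : ℤ) ^ (p - 1) - 1) (p ^ 2)
    rw [show (((q : ℤ) ^ (p - 1) - 1 : ℤ) : ZMod (p ^ 2)) = (q : ZMod (p ^ 2)) ^ (p - 1) - 1 by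
      push_cast; ring] at h1
    rw [show (((p ^ 2 : ℕ)) : ℤ) = (p : ℤ) ^ 2 by push_cast; ring] at h1
    rw [← h1, sub_eq_zero]
  -- cardinalities of the quotients by (q)
  have hcardF : Nat.card ((𝓞 F) ⧸ (Ideal.span {(q : 𝓞 F)})) = q ^ p ^ n := by
    rw [aux_card_quot F q, hF]
  have hcardKq : Nat.card ((𝓞 K) ⧸ (Ideal.span {(q : 𝓞 K)})) = q ^ Module.finrank ℚ K :=
    aux_card_quot K q
  have hKrank : 0 < Module.finrank ℚ K := Module.finrank_pos
  have hKfin : Finite ((𝓞 K) ⧸ (Ideal.span {(q : 𝓞 K)})) := by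
    have h0 : Nat.card ((𝓞 K) ⧸ (Ideal.span {(q : 𝓞 K)})) ≠ 0 := by
      rw [hcardKq]; positivity
    exact (Nat.card_ne_zero.mp h0).2
  have hFfin : Finite ((𝓞 F) ⧸ (Ideal.span {(q : 𝓞 F)})) := by
    have h0 : Nat.card ((𝓞 F) ⧸ (Ideal.span {(q : 𝓞 F)})) ≠ 0 := by
      rw [hcardF]; positivity
    exact (Nat.card_ne_zero.mp h0).2
  have hKspanneTop : (Ideal.span {(q : 𝓞 K)}) ≠ ⊤ := by
    intro htop
    have hsub : Subsingleton ((𝓞 K) ⧸ (Ideal.span {(q : 𝓞 K)})) :=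
      Ideal.Quotient.subsingleton_iff.mpr htop
    have h2 : 1 < Nat.card ((𝓞 K) ⧸ (Ideal.span {(q : 𝓞 K)})) := by
      rw [hcardKq]
      exact Nat.one_lt_pow hKrank.ne' hq2
    have := Finite.one_lt_card_iff_nontrivial.mp h2
    exact false_of_nontrivial_of_subsingleton ((𝓞 K) ⧸ (Ideal.span {(q : 𝓞 K)}))
  -- choose a maximal ideal above q in 𝓞 K
  obtain ⟨P, hPmax, hPge⟩ := Ideal.exists_le_maximal _ hKspanneTop
  haveI := hPmax
  haveI hPprime : P.IsPrime := hPmax.isPrime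
  have hqinP : (q : 𝓞 K) ∈ P := hPge (Ideal.subset_span rfl)
  letI : Field ((𝓞 K) ⧸ P) := Ideal.Quotient.field P
  have hkKfin : Finite ((𝓞 K) ⧸ P) := by
    refine Finite.of_surjective (Ideal.Quotient.factor hPge) (fun x => ?_)
    obtain ⟨y, rfl⟩ := Ideal.Quotient.mk_surjective x
    exact ⟨Ideal.Quotient.mk _ y, Ideal.Quotient.factor_mk _ _⟩
  haveI : CharP ((𝓞 K) ⧸ P) q := by
    refine (CharP.charP_iff_prime_eq_zero hq).mpr ?_
    rw [← _root_.map_natCast (Ideal.Quotient.mk P) q]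
    exact Ideal.Quotient.eq_zero_iff_mem.mpr hqinP
  letI : Fintype ((𝓞 K) ⧸ P) := Fintype.ofFinite _
  obtain ⟨fK, -, hcardkK⟩ := FiniteField.card ((𝓞 K) ⧸ P) q
  set zb : (𝓞 K) ⧸ P := Ideal.Quotient.mk P z with hzb
  have hzbM : zb ^ M = 1 := by
    rw [hzb, ← _root_.map_pow, hzprim.pow_eq_one, _root_.map_one]
  -- the prime below P in 𝓞 F
  set f0 : (𝓞 F) →+* (𝓞 K) := algebraMap (𝓞 F) (𝓞 K) with hf0
  set p' : Ideal (𝓞 F) := Ideal.comap f0 P with hp'def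
  haveI hp'prime : p'.IsPrime := Ideal.IsPrime.comap f0
  have hqinp' : (q : 𝓞 F) ∈ p' := by
    rw [hp'def, Ideal.mem_comap, hf0, _root_.map_natCast]
    exact hqinP
  have hspanle : Ideal.span {(q : 𝓞 F)} ≤ p' := by
    rw [Ideal.span_le, Set.singleton_subset_iff]
    exact hqinp'
  have hp'ne : p' ≠ ⊤ := Ideal.comap_ne_top f0 hPmax.ne_top
  have hqF0 : (q : 𝓞 F) ≠ 0 := Nat.cast_ne_zero.mpr hq.ne_zero
  letI : Field ((𝓞 F) ⧸ p') := Ideal.Quotient.field p'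
  have hkFfin : Finite ((𝓞 F) ⧸ p') :=
    Finite.of_injective _ (Ideal.quotientMap_injective (I := P) (f := f0))
  letI : Fintype ((𝓞 F) ⧸ p') := Fintype.ofFinite _
  haveI : CharP ((𝓞 F) ⧸ p') q := by
    refine (CharP.charP_iff_prime_eq_zero hq).mpr ?_
    rw [← _root_.map_natCast (Ideal.Quotient.mk p') q]
    exact Ideal.Quotient.eq_zero_iff_mem.mpr hqinp'
  obtain ⟨fF, -, hcardkF⟩ := FiniteField.card ((𝓞 F) ⧸ p') q
  letI : Algebra ((𝓞 F) ⧸ p') ((𝓞 K) ⧸ P) := Ideal.Quotient.algebraQuotientOfLEComap le_rfl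
  set r := Module.finrank ((𝓞 F) ⧸ p') ((𝓞 K) ⧸ P) with hrdef
  have hrk : Fintype.card ((𝓞 K) ⧸ P) = Fintype.card ((𝓞 F) ⧸ p') ^ r :=
    Module.card_eq_pow_finrank
  have hfsplit : (fK : ℕ) = (fF : ℕ) * r := by
    have h1 : (q : ℕ) ^ (fK : ℕ) = q ^ ((fF : ℕ) * r) := by
      rw [← hcardkK, hrk, hcardkF, ← pow_mul]
    exact Nat.pow_right_injective hq2 h1
  have hsurj_factor : Function.Surjective (Ideal.Quotient.factor hspanle) := by
    intro x
    obtain ⟨y, rfl⟩ := Ideal.Quotient.mk_surjective x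
    exact ⟨Ideal.Quotient.mk _ y, Ideal.Quotient.factor_mk _ _⟩
  have hfFle : (fF : ℕ) ≤ p ^ n := by
    have hle := Nat.card_le_card_of_surjective _ hsurj_factor
    rw [hcardF, Nat.card_eq_fintype_card, hcardkF] at hle
    exact (Nat.pow_le_pow_iff_right hq2).mp hle
  constructor
  · -- q inert → q^(p-1) ≢ 1 mod p²
    intro hPrime hcon
    have hcon' : (p : ℤ) ^ 2 ∣ (q : ℤ) ^ (p - 1) - 1 := hiff.mp hcon
    have hD := aux_ntA hp hp3 hn hpdvdqZ hcon'
    set D := (p - 1) * p ^ (n - 1) with hDdef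
    have hDpos : 0 < D := Nat.mul_pos (by omega) (Nat.pow_pos hp.pos)
    have hDlt : D < p ^ n := by
      calc D < p * p ^ (n - 1) := by
              exact Nat.mul_lt_mul_of_lt_of_le (by omega) le_rfl (Nat.pow_pos hp.pos)
        _ = p ^ n := by rw [← pow_succ']; congr 1; omega
    have hqD1 : 1 ≤ q ^ D := Nat.one_le_pow _ _ hq.pos
    have hMD : M ∣ q ^ D - 1 := by
      have h1 : ((M : ℕ) : ℤ) ∣ ((q ^ D - 1 : ℕ) : ℤ) := by
        rw [Nat.cast_sub hqD1, hM]
        push_cast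
        exact hD
      exact_mod_cast h1
    obtain ⟨c, hc⟩ := hMD
    have hqDeq : q ^ D = M * c + 1 := by omega
    have hzbfix : zb ^ (q ^ D) = zb := by
      rw [hqDeq, pow_add, pow_one, pow_mul, hzbM, one_pow, one_mul]
    haveI : ExpChar ((𝓞 K) ⧸ P) q := ExpChar.prime hq
    set φ := iterateFrobenius ((𝓞 K) ⧸ P) q D with hφdef
    have hφ : ∀ x : (𝓞 K) ⧸ P, φ x = x ^ q ^ D := fun x => iterateFrobenius_def q D x
    have hfixall : ∀ x : ((𝓞 K) ⧸ P), x ^ q ^ D = x := by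
      have heq : Set.EqOn (⇑(φ.comp (Ideal.Quotient.mk P))) (⇑(Ideal.Quotient.mk P))
          ({z} : Set (𝓞 K)) := by
        intro t ht
        rw [Set.mem_singleton_iff] at ht
        subst ht
        simp only [RingHom.coe_comp, Function.comp_apply]
        rw [hφ]
        exact hzbfix
      have hcl := RingHom.eqOn_set_closure heq
      have htop : Subring.closure ({z} : Set (𝓞 K)) = ⊤ := by
        have h2 := hadj
        rw [Algebra.adjoin_int] at h2
        ext x
        simp only [Subring.mem_top, iff_true]
        have hx : x ∈ subalgebraOfSubring (Subring.closure ({z} : Set (𝓞 K))) := by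
          rw [h2]; exact Algebra.mem_top
        exact hx
      intro x
      obtain ⟨y, rfl⟩ := Ideal.Quotient.mk_surjective x
      have hy : y ∈ (Subring.closure ({z} : Set (𝓞 K)) : Set (𝓞 K)) := by
        rw [htop]; exact Subring.mem_top y
      have h3 := hcl hy
      simp only [RingHom.coe_comp, Function.comp_apply] at h3
      rw [← hφ]
      exact h3
    have hqD2 : 2 ≤ q ^ D := le_trans hq2 (Nat.le_self_pow hDpos.ne' q)
    have hbound : Nat.card ((𝓞 K) ⧸ P) ≤ q ^ D := aux_card_le_of_pow_eq hqD2 hfixall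
    -- span q = p' by maximality
    have hspan_bot : Ideal.span {(q : 𝓞 F)} ≠ ⊥ := by
      rw [Ne, Ideal.span_singleton_eq_bot]
      exact hqF0
    haveI hspanmax := hPrime.isMaximal hspan_bot
    have hspan_eq : Ideal.span {(q : 𝓞 F)} = p' := hspanmax.eq_of_le hp'ne hspanle
    have hinj : Nat.card ((𝓞 F) ⧸ p') ≤ Nat.card ((𝓞 K) ⧸ P) :=
      Nat.card_le_card_of_injective _ (Ideal.quotientMap_injective (I := P) (f := f0))
    rw [← hspan_eq, hcardF] at hinj
    have hfinal : q ^ p ^ n ≤ q ^ D := le_trans hinj hbound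
    have := (Nat.pow_le_pow_iff_right hq2).mp hfinal
    omega
  · -- q^(p-1) ≢ 1 mod p² → q inert
    intro hcon
    have hnot : ¬ (p : ℤ) ^ 2 ∣ (q : ℤ) ^ (p - 1) - 1 := fun h => hcon (hiff.mpr h)
    -- zb has order exactly M
    have hzb0 : zb ≠ 0 := by
      intro h0
      have h1 := hzbM
      rw [h0, zero_pow hMpos.ne'] at h1
      exact zero_ne_one h1
    have hzbpn : zb ^ (p ^ n) ≠ 1 := by
      intro h1
      set ξ : 𝓞 K := z ^ (p ^ n) with hξ
      have hξprim : IsPrimitiveRoot ξ p := hzprim.pow hMpos (by rw [hM, pow_succ])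
      have hdvd : (1 - ξ) ∣ ((p : 𝓞 K)) := by
        have h2 := Polynomial.sub_dvd_eval_sub (1 : 𝓞 K) ξ (Polynomial.cyclotomic p (𝓞 K))
        rw [Polynomial.eval_one_cyclotomic_prime,
          hξprim.isRoot_cyclotomic hp.pos, sub_zero] at h2
        exact h2
      have hξP : (1 : 𝓞 K) - ξ ∈ P := by
        have hmk : Ideal.Quotient.mk P ((1 : 𝓞 K) - ξ) = 0 := by
          rw [_root_.map_sub, _root_.map_one, hξ, _root_.map_pow]
          rw [← hzb, h1, sub_self]
        exact Ideal.Quotient.eq_zero_iff_mem.mp hmk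
      have hpP : ((p : 𝓞 K)) ∈ P := by
        obtain ⟨c, hc⟩ := hdvd
        rw [hc]
        exact Ideal.mul_mem_right _ _ hξP
      have hp0 : (p : ((𝓞 K) ⧸ P)) = 0 := by
        rw [← _root_.map_natCast (Ideal.Quotient.mk P) p]
        exact Ideal.Quotient.eq_zero_iff_mem.mpr hpP
      have hqdvdp : q ∣ p := (CharP.cast_eq_zero_iff _ q p).mp hp0
      exact hpq ((Nat.prime_dvd_prime_iff_eq hq hp).mp hqdvdp).symm
    have hord : orderOf zb = M := by
      have hdvd : orderOf zb ∣ M := orderOf_dvd_of_pow_eq_one hzbM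
      rw [hM] at hdvd
      obtain ⟨i, hile, hi⟩ := (Nat.dvd_prime_pow hp).mp hdvd
      rcases Nat.lt_or_ge i (n + 1) with hlt | hge
      · exfalso
        apply hzbpn
        refine orderOf_dvd_iff_pow_eq_one.mp ?_
        rw [hi]
        exact pow_dvd_pow p (by omega)
      · rw [hM, hi]
        congr 1
        omega
    have hq1 : 1 ≤ q ^ (fK : ℕ) := Nat.one_le_pow _ _ hq.pos
    have hMdvd : M ∣ q ^ (fK : ℕ) - 1 := by
      rw [← hord]
      apply orderOf_dvd_of_pow_eq_one
      have hzq : zb ^ (q ^ (fK : ℕ)) = zb := by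
        rw [← hcardkK]
        exact FiniteField.pow_card zb
      have h2 : zb ^ (q ^ (fK : ℕ) - 1) * zb = 1 * zb := by
        rw [← pow_succ, Nat.sub_add_cancel hq1, one_mul]
        exact hzq
      exact mul_right_cancel₀ hzb0 h2
    have hmodZ : (p : ℤ) ^ (n + 1) ∣ (q : ℤ) ^ (fK : ℕ) - 1 := by
      have h1 : ((M : ℕ) : ℤ) ∣ ((q ^ (fK : ℕ) - 1 : ℕ) : ℤ) := Int.natCast_dvd_natCast.mpr hMdvd
      rw [Nat.cast_sub hq1, hM] at h1
      push_cast at h1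
      exact h1
    have hpnfK : p ^ n ∣ (fK : ℕ) := aux_ntB hp hp3 hpdvdqZ hferm hnot hmodZ
    -- minpoly degree bound
    haveI : FiniteDimensional F K := FiniteDimensional.right ℚ F K
    have hzint : IsIntegral (𝓞 F) z :=
      IsIntegral.tower_top (NumberField.RingOfIntegers.isIntegral z)
    set μ := minpoly (𝓞 F) z with hμ
    have hμmonic : μ.Monic := minpoly.monic hzint
    have hμdeg : μ.natDegree ≤ p - 1 := by
      have hζint : IsIntegral (𝓞 F) ζ := by
        have := hzint.map (IsScalarTower.toAlgHom (𝓞 F) (𝓞 K) K)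
        exact this
      have e1 : minpoly (𝓞 F) ζ = μ := by
        rw [hμ, show ζ = algebraMap (𝓞 K) K z from rfl,
          minpoly.algebraMap_eq NumberField.RingOfIntegers.coe_injective]
      have e2 : minpoly F ζ = (minpoly (𝓞 F) ζ).map (algebraMap (𝓞 F) F) :=
        minpoly.isIntegrallyClosed_eq_field_fractions' F hζint
      have e3 : (minpoly F ζ).natDegree ≤ Module.finrank F K := minpoly.natDegree_le ζ
      rw [e2, e1, (hμmonic.natDegree_map _), hFK] at e3
      exact e3
    set μF := μ.map (Ideal.Quotient.mk p') with hμF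
    have hμFmonic : μF.Monic := hμmonic.map _
    have hμFdegeq : μF.natDegree = μ.natDegree := hμmonic.natDegree_map _
    have hμFne1 : μF ≠ 1 := by
      intro h1
      have h0 := minpoly.natDegree_pos hzint
      rw [← hμ] at h0
      rw [← hμFdegeq, h1, Polynomial.natDegree_one] at h0
      exact lt_irrefl 0 h0
    have hcomm : (algebraMap ((𝓞 F) ⧸ p') ((𝓞 K) ⧸ P)).comp (Ideal.Quotient.mk p') =
        (Ideal.Quotient.mk P).comp f0 := Ideal.quotientMap_comp_mk le_rfl
    have hμroot : Polynomial.aeval zb μF = 0 := by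
      rw [hμF, Polynomial.aeval_def, Polynomial.eval₂_map, hcomm]
      have h4 : Polynomial.eval₂ ((Ideal.Quotient.mk P).comp f0) (Ideal.Quotient.mk P z) μ =
          Ideal.Quotient.mk P (Polynomial.eval₂ f0 z μ) := (Polynomial.hom_eval₂ μ f0 _ z).symm
      rw [hzb, h4, show Polynomial.eval₂ f0 z μ = Polynomial.aeval z μ from rfl,
        minpoly.aeval, _root_.map_zero]
    -- every element of 𝓞K/P is a sum of at most p-1 terms over 𝓞F/p'
    have hsur : ∀ x : ((𝓞 K) ⧸ P), ∃ c : Fin (p - 1) → ((𝓞 F) ⧸ p'),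
        (∑ i : Fin (p - 1), c i • zb ^ (i : ℕ)) = x := by
      intro x
      obtain ⟨y, rfl⟩ := Ideal.Quotient.mk_surjective x
      have hy : y ∈ Algebra.adjoin ℤ {z} := by rw [hadj]; exact Algebra.mem_top
      rw [Algebra.adjoin_singleton_eq_range_aeval] at hy
      obtain ⟨g, hg⟩ := hy
      set gF := g.map (Int.castRingHom ((𝓞 F) ⧸ p')) with hgF
      set rr := gF %ₘ μF with hrr
      refine ⟨fun i => rr.coeff (i : ℕ), ?_⟩
      have hrdeg : rr.natDegree < p - 1 :=
        lt_of_lt_of_le (Polynomial.natDegree_modByMonic_lt gF hμFmonic hμFne1)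
          (hμFdegeq ▸ hμdeg)
      have hsum : (∑ i : Fin (p - 1), rr.coeff (i : ℕ) • zb ^ (i : ℕ)) =
          Polynomial.aeval zb rr := by
        rw [Polynomial.aeval_eq_sum_range' hrdeg]
        exact Fin.sum_univ_eq_sum_range (fun i => rr.coeff i • zb ^ i) (p - 1)
      rw [hsum]
      have hmod : Polynomial.aeval zb rr = Polynomial.aeval zb gF := by
        conv_rhs => rw [← Polynomial.modByMonic_add_div gF μF]
        rw [_root_.map_add, _root_.map_mul, hμroot, zero_mul, add_zero, ← hrr]
      rw [hmod, ← hg, hgF, Polynomial.aeval_def, Polynomial.eval₂_map]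
      rw [show ((Polynomial.aeval z).toRingHom g) = Polynomial.eval₂ (algebraMap ℤ (𝓞 K)) z g from rfl]
      rw [Polynomial.hom_eval₂]
      congr 1
    have hcardle : Nat.card ((𝓞 K) ⧸ P) ≤ Nat.card ((𝓞 F) ⧸ p') ^ (p - 1) := by
      have h5 := Nat.card_le_card_of_surjective
        (fun c : Fin (p - 1) → ((𝓞 F) ⧸ p') => ∑ i : Fin (p - 1), c i • zb ^ (i : ℕ))
        (fun x => hsur x)
      rwa [Nat.card_fun, Nat.card_eq_fintype_card (α := Fin (p - 1)), Fintype.card_fin] at h5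
    have hfK1 : 1 ≤ (fK : ℕ) := fK.one_le
    have hrpos : 0 < r := by
      by_contra h0
      have hr0 : r = 0 := by omega
      rw [hr0, Nat.mul_zero] at hfsplit
      omega
    have hrle : r ≤ p - 1 := by
      rw [Nat.card_eq_fintype_card, Nat.card_eq_fintype_card, hcardkK, hcardkF,
        ← pow_mul] at hcardle
      have h6 := (Nat.pow_le_pow_iff_right hq2).mp hcardle
      rw [hfsplit] at h6
      exact Nat.le_of_mul_le_mul_left h6 fF.pos
    have hcop : Nat.Coprime (p ^ n) r := by
      refine Nat.Coprime.pow_left _ (hp.coprime_iff_not_dvd.mpr ?_)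
      intro hd
      have := Nat.le_of_dvd hrpos hd
      omega
    have hpnfF : p ^ n ∣ (fF : ℕ) := by
      refine hcop.dvd_of_dvd_mul_right ?_
      rw [← hfsplit]
      exact hpnfK
    have hfFeq : (fF : ℕ) = p ^ n := Nat.le_antisymm hfFle (Nat.le_of_dvd fF.pos hpnfF)
    letI : Fintype ((𝓞 F) ⧸ Ideal.span {(q : 𝓞 F)}) := Fintype.ofFinite _
    have hcards : Fintype.card ((𝓞 F) ⧸ Ideal.span {(q : 𝓞 F)}) =
        Fintype.card ((𝓞 F) ⧸ p') := by
      rw [← Nat.card_eq_fintype_card, hcardF, hcardkF, hfFeq]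
    have hbij : Function.Bijective (Ideal.Quotient.factor hspanle) :=
      (Fintype.bijective_iff_surjective_and_card _).mpr ⟨hsurj_factor, hcards⟩
    have hp'le : p' ≤ Ideal.span {(q : 𝓞 F)} := by
      intro x hx
      have h0 : (Ideal.Quotient.factor hspanle) (Ideal.Quotient.mk _ x) = 0 := by
        rw [Ideal.Quotient.factor_mk]
        exact Ideal.Quotient.eq_zero_iff_mem.mpr hx
      have h1 : (Ideal.Quotient.factor hspanle) (Ideal.Quotient.mk _ x) =
          (Ideal.Quotient.factor hspanle) 0 := by rw [h0, _root_.map_zero]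
      have h2 := hbij.injective h1
      exact Ideal.Quotient.eq_zero_iff_mem.mp h2
    have heq : Ideal.span {(q : 𝓞 F)} = p' := le_antisymm hspanle hp'le
    rw [heq]
    exact hp'prime
end

section
/- Let p, q be distinct primes with p odd, and n ≥ 1. The order of the class of q in (Z/p^{n+1}Z)^× is divisible by p^n if and only if q^(p-1) ≢ 1 (mod p²). -/
open NumberField FractionalIdeal IsDedekindDomain

lemma cast_pow_eq_one_iff' (q N m : ℕ) :
    (q : ZMod N) ^ m = 1 ↔ (N : ℤ) ∣ (q : ℤ) ^ m - 1 := by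
  rw [← Nat.cast_pow, ← Nat.cast_one, ZMod.natCast_eq_natCast_iff, Nat.modEq_iff_dvd]
  push_cast
  exact dvd_sub_comm

/-- The order of the class of q in (ℤ/p^{n+1}ℤ)ˣ is divisible by p^n iff
q^(p-1) ≢ 1 (mod p²). -/
theorem stmt2 (p q n : ℕ) (hp : p.Prime) (hq : q.Prime) (hodd : Odd p) (hpq : p ≠ q)
    (hn : 1 ≤ n) :
    p ^ n ∣ orderOf (q : ZMod (p ^ (n + 1))) ↔ ¬ ((q : ZMod (p ^ 2)) ^ (p - 1) = 1) := by
  haveI : Fact p.Prime := ⟨hp⟩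
  haveI : NeZero (p ^ (n + 1)) := ⟨pow_ne_zero _ hp.pos.ne'⟩
  have hp2 : 2 ≤ p := hp.two_le
  have hcop : Nat.Coprime p q := (Nat.coprime_primes hp hq).mpr hpq
  have hpq' : ¬ p ∣ q := fun h => hpq ((Nat.prime_dvd_prime_iff_eq hp hq).mp h)
  set x : ℤ := (q : ℤ) ^ (p - 1) with hxdef
  have hpZ : Prime (p : ℤ) := Nat.prime_iff_prime_int.mp hp
  have hxdvd : (p : ℤ) ∣ x - 1 := by
    have h1 : (q : ZMod p) ≠ 0 := by
      rw [Ne, ZMod.natCast_eq_zero_iff]; exact hpq'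
    have h2 := ZMod.pow_card_sub_one_eq_one h1
    rwa [cast_pow_eq_one_iff'] at h2
  have hxnd : ¬ (p : ℤ) ∣ x := fun h =>
    hpq' (Int.natCast_dvd_natCast.mp (hpZ.dvd_of_dvd_pow h))
  have key : ∀ k : ℕ, emultiplicity (p : ℤ) (x ^ p ^ k - 1) =
      emultiplicity (p : ℤ) (x - 1) + k := by
    intro k
    have h := emultiplicity_pow_prime_pow_sub_pow_prime_pow (x := x) (y := 1)
      hpZ hodd (by simpa using hxdvd) hxnd k
    simpa using h
  have horder : ∀ k : ℕ, ((q : ZMod (p ^ (n + 1))) ^ ((p - 1) * p ^ k) = 1 ↔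
      ((n + 1 : ℕ) : ℕ∞) ≤ emultiplicity (p : ℤ) (x - 1) + k) := by
    intro k
    rw [cast_pow_eq_one_iff', Nat.cast_pow, pow_dvd_iff_le_emultiplicity, pow_mul, key k]
  have hrhs : ((q : ZMod (p ^ 2)) ^ (p - 1) = 1) ↔
      ((2 : ℕ) : ℕ∞) ≤ emultiplicity (p : ℤ) (x - 1) := by
    rw [cast_pow_eq_one_iff', Nat.cast_pow, pow_dvd_iff_le_emultiplicity]
  have hdvd_tot : orderOf (q : ZMod (p ^ (n + 1))) ∣ p ^ n * (p - 1) := by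
    have hcop2 : Nat.Coprime q (p ^ (n + 1)) := (hcop.symm).pow_right _
    have hu := ZMod.pow_totient (ZMod.unitOfCoprime q hcop2)
    have h1 : (q : ZMod (p ^ (n + 1))) ^ Nat.totient (p ^ (n + 1)) = 1 := by
      rw [← ZMod.coe_unitOfCoprime q hcop2, ← Units.val_pow_eq_pow_val, hu, Units.val_one]
    have h3 := orderOf_dvd_of_pow_eq_one h1
    rwa [Nat.totient_prime_pow hp (Nat.succ_pos n), Nat.succ_sub_one] at h3
  set e := orderOf (q : ZMod (p ^ (n + 1))) with he
  have hppos : 0 < p ^ n := pow_pos hp.pos n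
  have he0 : e ≠ 0 := by
    intro h
    rw [h] at hdvd_tot
    have h' := Nat.eq_zero_of_zero_dvd hdvd_tot
    rcases Nat.mul_eq_zero.mp h' with h'' | h'' <;> omega
  constructor
  · -- p^n ∣ e → q^{p-1} ≠ 1 mod p²
    intro hord hcontra
    have hv2 : ((2 : ℕ) : ℕ∞) ≤ emultiplicity (p : ℤ) (x - 1) := hrhs.mp hcontra
    have h1 : (q : ZMod (p ^ (n + 1))) ^ ((p - 1) * p ^ (n - 1)) = 1 := by
      rw [horder (n - 1)]
      have hcast : ((n + 1 : ℕ) : ℕ∞) = ((2 : ℕ) : ℕ∞) + ((n - 1 : ℕ) : ℕ∞) := by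
        rw [← Nat.cast_add]
        congr 1
        omega
      rw [hcast]
      exact add_le_add hv2 le_rfl
    have h2 : p ^ n ∣ (p - 1) * p ^ (n - 1) :=
      hord.trans (orderOf_dvd_of_pow_eq_one h1)
    have hn' : n - 1 + 1 = n := by omega
    have h3 : p ^ (n - 1) * p ∣ p ^ (n - 1) * (p - 1) := by
      rw [← pow_succ, hn', mul_comm (p ^ (n - 1)) (p - 1)]
      exact h2
    have h4 : p ∣ p - 1 := (Nat.mul_dvd_mul_iff_left (pow_pos hp.pos (n - 1))).mp h3
    have h5 := Nat.le_of_dvd (by omega) h4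
    omega
  · -- q^{p-1} ≠ 1 mod p² → p^n ∣ e
    intro hcontra
    have hpos : 0 < emultiplicity (p : ℤ) (x - 1) := emultiplicity_pos_of_dvd hxdvd
    have hlt : emultiplicity (p : ℤ) (x - 1) < ((2 : ℕ) : ℕ∞) :=
      lt_of_not_ge fun h => hcontra (hrhs.mpr h)
    have hv1 : emultiplicity (p : ℤ) (x - 1) = 1 := by
      have hle : emultiplicity (p : ℤ) (x - 1) ≤ 1 := by
        apply (ENat.lt_add_one_iff (n := 1) (by simp)).mp
        rwa [one_add_one_eq_two, ← Nat.cast_ofNat (n := 2)]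
      exact le_antisymm hle (ENat.one_le_iff_ne_zero.mpr hpos.ne')
    have hne : ¬ (q : ZMod (p ^ (n + 1))) ^ ((p - 1) * p ^ (n - 1)) = 1 := by
      rw [horder (n - 1), hv1, not_le]
      have hcast : (1 : ℕ∞) + ((n - 1 : ℕ) : ℕ∞) = ((n : ℕ) : ℕ∞) := by
        rw [← Nat.cast_one, ← Nat.cast_add]
        congr 1
        omega
      rw [hcast]
      exact_mod_cast Nat.lt_succ_self n
    have hnd : ¬ e ∣ (p - 1) * p ^ (n - 1) :=
      fun hd => hne (orderOf_dvd_iff_pow_eq_one.mp hd)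
    set a := e.factorization p with ha
    have hproj : p ^ a ∣ e := Nat.ordProj_dvd e p
    have hcoppm1 : Nat.Coprime p (p - 1) := by
      rw [hp.coprime_iff_not_dvd]
      intro h
      have := Nat.le_of_dvd (by omega) h
      omega
    have hcompl : (e / p ^ a) ∣ p - 1 := by
      have h1 : (e / p ^ a) ∣ p ^ n * (p - 1) := (Nat.ordCompl_dvd e p).trans hdvd_tot
      have h2 : Nat.Coprime (e / p ^ a) (p ^ n) :=
        ((Nat.coprime_ordCompl hp he0).symm).pow_right _
      exact (Nat.Coprime.dvd_of_dvd_mul_left h2 h1)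
    have han : a ≤ n := by
      have h1 : p ^ a ∣ p ^ n * (p - 1) := hproj.trans hdvd_tot
      have h2 : Nat.Coprime (p ^ a) (p - 1) := hcoppm1.pow_left _
      have h3 : p ^ a ∣ p ^ n := h2.dvd_of_dvd_mul_right h1
      exact (Nat.pow_dvd_pow_iff_le_right hp.one_lt).mp h3
    have hae : a = n := by
      by_contra hne'
      have han1 : a ≤ n - 1 := by omega
      apply hnd
      calc e = p ^ a * (e / p ^ a) := (Nat.ordProj_mul_ordCompl_eq_self e p).symm
        _ ∣ p ^ (n - 1) * (p - 1) := mul_dvd_mul (pow_dvd_pow p han1) hcompl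
        _ = (p - 1) * p ^ (n - 1) := mul_comm _ _
    rw [← hae]
    exact hproj
end

section
/- Let F/Q be a Galois extension of degree p^n (p prime, n ≥ 1) in which p is totally ramified, with 𝔭 the unique prime above p. If λ is a unit of O_F with Norm_{F/Q}(λ) = 1, then λ ≡ 1 (mod 𝔭). -/
set_option maxHeartbeats 1000000
set_option synthInstance.maxHeartbeats 400000


open NumberField FractionalIdeal IsDedekindDomain

/-- Under the same total ramification setup, a unit λ of O_F with norm 1
satisfies λ ≡ 1 (mod 𝔭). -/
theorem stmt4 (p n : ℕ) (hp : p.Prime) (hn : 1 ≤ n)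
    (F : Type*) [Field F] [NumberField F] [IsGalois ℚ F]
    (hdeg : Module.finrank ℚ F = p ^ n)
    (P : Ideal (𝓞 F)) (hP : P.IsPrime)
    (hram : Ideal.span {(p : 𝓞 F)} = P ^ (p ^ n))
    (lam : 𝓞 F) (hu : IsUnit lam) (hnorm : Algebra.norm ℤ lam = 1) :
    lam - 1 ∈ P := by
  classical
  haveI : Fact p.Prime := ⟨hp⟩
  have hpn0 : p ^ n ≠ 0 := pow_ne_zero _ hp.ne_zero
  -- p ∈ P
  have hspan_le : Ideal.span {(p : 𝓞 F)} ≤ P := by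
    rw [hram]; exact Ideal.pow_le_self hpn0
  have hpP : (p : 𝓞 F) ∈ P := hspan_le (Ideal.subset_span rfl)
  -- P ≠ ⊥
  have hPbot : P ≠ ⊥ := by
    intro h
    rw [h, Ideal.mem_bot] at hpP
    exact (Nat.cast_ne_zero.mpr hp.ne_zero : (p : 𝓞 F) ≠ 0) hpP
  haveI hPmax : P.IsMaximal := Ideal.IsPrime.isMaximal hP hPbot
  haveI := hP
  -- every ℤ-algebra automorphism preserves P
  have hstable : ∀ (τ : 𝓞 F ≃ₐ[ℤ] 𝓞 F) (x : 𝓞 F), x ∈ P → τ x ∈ P := by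
    intro τ x hx
    have hQprime : (P.comap (τ : 𝓞 F →+* 𝓞 F)).IsPrime := Ideal.IsPrime.comap _
    have hpQ : (p : 𝓞 F) ∈ P.comap (τ : 𝓞 F →+* 𝓞 F) := by
      simpa using (by simpa using hpP : ((p : ℕ) : 𝓞 F) ∈ P)
    have hle : Ideal.span {(p : 𝓞 F)} ≤ P.comap (τ : 𝓞 F →+* 𝓞 F) :=
      (Ideal.span_singleton_le_iff_mem _).mpr hpQ
    rw [hram] at hle
    have : P ≤ P.comap (τ : 𝓞 F →+* 𝓞 F) := hQprime.le_of_pow_le hle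
    exact this hx
  -- the norm of P is p
  have hN : Ideal.absNorm P = p := by
    have h1 : Ideal.absNorm (Ideal.span {(p : 𝓞 F)}) = p ^ (p ^ n) := by
      rw [Ideal.absNorm_span_singleton]
      have h2 : (p : 𝓞 F) = algebraMap ℤ (𝓞 F) (p : ℤ) := by simp
      have hb := Algebra.norm_algebraMap_of_basis (Module.Free.chooseBasis ℤ (𝓞 F)) (p : ℤ)
      rw [h2, hb, ← Module.finrank_eq_card_chooseBasisIndex, NumberField.RingOfIntegers.rank, hdeg]
      simp [Int.natAbs_pow]
    rw [hram, map_pow] at h1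
    exact Nat.pow_left_injective hpn0 h1
  -- quotient ring
  haveI : Nontrivial (𝓞 F ⧸ P) := Ideal.Quotient.nontrivial_iff.mpr hP.ne_top
  have hcard : Nat.card (𝓞 F ⧸ P) = p := by
    rw [Ideal.absNorm_apply, Submodule.cardQuot_apply] at hN
    exact hN
  haveI : Finite (𝓞 F ⧸ P) := Nat.finite_of_card_ne_zero (by rw [hcard]; exact hp.ne_zero)
  have hpR : ((p : ℕ) : 𝓞 F ⧸ P) = 0 := by
    have : Ideal.Quotient.mk P ((p : ℕ) : 𝓞 F) = 0 := (Ideal.Quotient.eq_zero_iff_mem).mpr hpP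
    simpa using this
  haveI : CharP (𝓞 F ⧸ P) p := (CharP.charP_iff_prime_eq_zero hp).mpr hpR
  -- ZMod p → R is surjective
  let f : ZMod p →+* (𝓞 F ⧸ P) := ZMod.castHom dvd_rfl (𝓞 F ⧸ P)
  have hfsurj : Function.Surjective f := by
    have : Function.Bijective f :=
      (Nat.bijective_iff_injective_and_card f).mpr
        ⟨f.injective, by rw [Nat.card_zmod, hcard]⟩
    exact this.surjective
  -- every ring endomorphism of R induced by an automorphism fixes everything
  have hfix : ∀ (τ : 𝓞 F ≃ₐ[ℤ] 𝓞 F) (x : 𝓞 F),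
      Ideal.Quotient.mk P (τ x) = Ideal.Quotient.mk P x := by
    intro τ x
    have hle : P ≤ P.comap (τ : 𝓞 F →+* 𝓞 F) := fun y hy => hstable τ y hy
    let τbar : (𝓞 F ⧸ P) →+* (𝓞 F ⧸ P) := Ideal.quotientMap P (τ : 𝓞 F →+* 𝓞 F) hle
    have h1 : Ideal.Quotient.mk P (τ x) = τbar (Ideal.Quotient.mk P x) :=
      (Ideal.quotientMap_mk (H := hle) (x := x)).symm
    obtain ⟨a, ha⟩ := hfsurj (Ideal.Quotient.mk P x)
    have h2 : τbar.comp f = f := RingHom.ext_zmod _ _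
    rw [h1, ← ha, ← RingHom.comp_apply, h2]
  -- the norm as a product of automorphisms
  have hprod : (∏ σ : F ≃ₐ[ℚ] F, galRestrict ℤ ℚ F (𝓞 F) σ lam)
      = algebraMap ℤ (𝓞 F) (Algebra.norm ℤ lam) := by
    rw [prod_galRestrict_eq_norm ℤ ℚ F (𝓞 F) lam]
    congr 1
    apply IsFractionRing.injective ℤ ℚ
    rw [IsIntegralClosure.algebraMap_mk']
    rw [show (algebraMap ℤ ℚ (Algebra.norm ℤ lam)) = ((Algebra.norm ℤ lam : ℤ) : ℚ) from rfl,
      Algebra.coe_norm_int]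
  -- reduce mod P
  have hmk : (Ideal.Quotient.mk P lam) ^ (p ^ n) = 1 := by
    have := congrArg (Ideal.Quotient.mk P) hprod
    rw [map_prod] at this
    have hleft : ∀ σ : F ≃ₐ[ℚ] F,
        Ideal.Quotient.mk P (galRestrict ℤ ℚ F (𝓞 F) σ lam) = Ideal.Quotient.mk P lam :=
      fun σ => hfix (galRestrict ℤ ℚ F (𝓞 F) σ) lam
    rw [Finset.prod_congr rfl (fun σ _ => hleft σ), Finset.prod_const, Finset.card_univ, ← Nat.card_eq_fintype_card,
      IsGalois.card_aut_eq_finrank, hdeg] at this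
    rw [this, hnorm]
    simp
  -- conclude via the order of the unit `mk lam`
  haveI : Fintype (𝓞 F ⧸ P) := Fintype.ofFinite (𝓞 F ⧸ P)
  haveI : Fintype (𝓞 F ⧸ P)ˣ := Fintype.ofFinite (𝓞 F ⧸ P)ˣ
  obtain ⟨u, hux⟩ := hu.map (Ideal.Quotient.mk P)
  have hu1 : u ^ (p ^ n) = 1 := by
    ext
    rw [Units.val_pow_eq_pow_val, hux, hmk, Units.val_one]
  have hdvd1 : orderOf u ∣ p ^ n := orderOf_dvd_of_pow_eq_one hu1
  have hdvd2 : orderOf u ∣ Fintype.card (𝓞 F ⧸ P)ˣ := orderOf_dvd_card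
  have hcardlt : Fintype.card (𝓞 F ⧸ P)ˣ < p := by
    have h0 : (0 : 𝓞 F ⧸ P) ∉ Set.range (Units.val : (𝓞 F ⧸ P)ˣ → 𝓞 F ⧸ P) := by
      rintro ⟨v, hv⟩
      have : (1 : 𝓞 F ⧸ P) = 0 := by
        rw [← v.mul_inv, hv, zero_mul]
      exact one_ne_zero this
    have hinj : Function.Injective (Units.val : (𝓞 F ⧸ P)ˣ → 𝓞 F ⧸ P) := fun _ _ h => Units.ext h
    have := Fintype.card_lt_of_injective_of_notMem (Units.val : (𝓞 F ⧸ P)ˣ → 𝓞 F ⧸ P) hinj h0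
    calc Fintype.card (𝓞 F ⧸ P)ˣ < Fintype.card (𝓞 F ⧸ P) := this
    _ = p := by rw [← Nat.card_eq_fintype_card, hcard]
  have hord1 : orderOf u = 1 := by
    obtain ⟨k, hk, hke⟩ := (Nat.dvd_prime_pow hp).mp hdvd1
    rcases Nat.eq_zero_or_pos k with hk0 | hk0
    · rw [hke, hk0, pow_zero]
    · exfalso
      have hple : p ≤ p ^ k := Nat.le_self_pow hk0.ne' p
      have : p ^ k ≤ Fintype.card (𝓞 F ⧸ P)ˣ :=
        Nat.le_of_dvd Fintype.card_pos (hke ▸ hdvd2)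
      omega
  have hu_eq : u = 1 := orderOf_eq_one_iff.mp hord1
  have : Ideal.Quotient.mk P lam = Ideal.Quotient.mk P 1 := by
    rw [← hux, hu_eq, Units.val_one]
    exact (_root_.map_one (Ideal.Quotient.mk P)).symm
  exact (Ideal.Quotient.eq).mp this
end

section
/- Let p ≠ 3 be a prime and let F/Q be a Galois extension of degree p^n in which p is totally ramified. Then there are no units λ, μ ∈ O_F^× with λ + μ = 1. -/
open NumberField FractionalIdeal IsDedekindDomain

set_option maxHeartbeats 1000000 in
set_option synthInstance.maxHeartbeats 400000 in
/-- For a prime p ≠ 3 and F/ℚ Galois of degree p^n with p totally ramified,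
the unit equation λ + μ = 1 has no solutions in units of O_F. -/
theorem stmt5 (p n : ℕ) (hp : p.Prime) (hp3 : p ≠ 3) (hn : 1 ≤ n)
    (F : Type*) [Field F] [NumberField F] [IsGalois ℚ F]
    (hdeg : Module.finrank ℚ F = p ^ n)
    (P : Ideal (𝓞 F)) (hP : P.IsPrime)
    (hram : Ideal.span {(p : 𝓞 F)} = P ^ (p ^ n)) :
    ¬ ∃ lam mu : (𝓞 F)ˣ, (lam : 𝓞 F) + (mu : 𝓞 F) = 1 := by
  haveI : Fact p.Prime := ⟨hp⟩
  haveI : NeZero p := ⟨hp.pos.ne'⟩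
  rintro ⟨lam, mu, hsum⟩
  set N := p ^ n with hN
  have hN1 : 1 ≤ N := Nat.one_le_pow _ _ hp.pos
  have hNne : N ≠ 0 := by omega
  -- p ∈ P
  have hpP : (p : 𝓞 F) ∈ P := by
    have h0 : (p : 𝓞 F) ∈ Ideal.span {(p : 𝓞 F)} := Ideal.mem_span_singleton_self _
    rw [hram] at h0
    exact Ideal.pow_le_self hNne h0
  -- P ≠ ⊥
  have hPbot : P ≠ ⊥ := by
    rintro rfl
    rw [← Ideal.zero_eq_bot, zero_pow hNne, Ideal.zero_eq_bot, Ideal.span_singleton_eq_bot] at hram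
    have : (p : ℚ) = 0 := by exact_mod_cast congrArg (algebraMap (𝓞 F) F) hram
    exact_mod_cast absurd this (by exact_mod_cast hp.pos.ne')
  haveI hPmax : P.IsMaximal := hP.isMaximal hPbot
  -- absNorm P = p
  have hd : Module.finrank ℤ (𝓞 F) = N := by rw [RingOfIntegers.rank, hdeg]
  have hdcard : Fintype.card (Module.Free.ChooseBasisIndex ℤ (𝓞 F)) = N := by
    rw [← Module.finrank_eq_card_chooseBasisIndex, hd]
  have habs : Ideal.absNorm P = p := by
    have h1 : Ideal.absNorm (Ideal.span {(p : 𝓞 F)}) = p ^ N := by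
      rw [Ideal.absNorm_span_singleton]
      have h2 : ((p : ℕ) : 𝓞 F) = algebraMap ℤ (𝓞 F) ((p : ℕ) : ℤ) := by
        rw [map_natCast]
      rw [h2, Algebra.norm_algebraMap_of_basis (Module.Free.chooseBasis ℤ (𝓞 F)), hdcard,
        Int.natAbs_pow]
      norm_num
    have h2 : Ideal.absNorm P ^ N = p ^ N := by
      rw [← map_pow, ← hram, h1]
    exact Nat.pow_left_injective hNne h2
  -- the residue field
  have hcard : Nat.card (𝓞 F ⧸ P) = p := by
    rw [← habs, Ideal.absNorm_apply, Submodule.cardQuot_apply]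
  haveI : Finite (𝓞 F ⧸ P) := Nat.finite_of_card_ne_zero (by rw [hcard]; exact hp.pos.ne')
  haveI : Fintype (𝓞 F ⧸ P) := Fintype.ofFinite _
  have hpk : ((p : ℕ) : 𝓞 F ⧸ P) = 0 := by
    rw [← map_natCast (Ideal.Quotient.mk P)]
    exact Ideal.Quotient.eq_zero_iff_mem.mpr hpP
  have hrc : ringChar (𝓞 F ⧸ P) = p := CharP.ringChar_of_prime_eq_zero hp hpk
  haveI : CharP (𝓞 F ⧸ P) p := by rw [← hrc]; exact ringChar.charP (𝓞 F ⧸ P)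
  -- the residue field is ZMod p
  have hbij : Function.Bijective (ZMod.castHom (dvd_refl p) (𝓞 F ⧸ P)) := by
    rw [Fintype.bijective_iff_injective_and_card]
    exact ⟨(ZMod.castHom (dvd_refl p) (𝓞 F ⧸ P)).injective,
      by rw [ZMod.card, ← Nat.card_eq_fintype_card, hcard]⟩
  have hend : ∀ (φ : (𝓞 F ⧸ P) →+* (𝓞 F ⧸ P)) (x : 𝓞 F ⧸ P), φ x = x := by
    intro φ x
    obtain ⟨z, rfl⟩ := hbij.surjective x
    have h3 : φ.comp (ZMod.castHom (dvd_refl p) (𝓞 F ⧸ P)) = ZMod.castHom (dvd_refl p) (𝓞 F ⧸ P) :=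
      RingHom.ext_zmod _ _
    calc φ (ZMod.castHom (dvd_refl p) (𝓞 F ⧸ P) z)
        = (φ.comp (ZMod.castHom (dvd_refl p) (𝓞 F ⧸ P))) z := rfl
      _ = ZMod.castHom (dvd_refl p) (𝓞 F ⧸ P) z := by rw [h3]
  have hpow : ∀ x : 𝓞 F ⧸ P, x ^ N = x := by
    intro x
    obtain ⟨z, rfl⟩ := hbij.surjective x
    rw [← map_pow, hN, ZMod.pow_card_pow]
  -- every Galois conjugate is congruent mod P
  have hfix : ∀ (σ : F ≃ₐ[ℚ] F) (x : 𝓞 F),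
      Ideal.Quotient.mk P (galRestrict ℤ ℚ F (𝓞 F) σ x) = Ideal.Quotient.mk P x := by
    intro σ x
    set f := (galRestrict ℤ ℚ F (𝓞 F) σ).toRingEquiv with hf
    have hQN : (Ideal.map (f : 𝓞 F →+* 𝓞 F) P) ^ N = P ^ N := by
      rw [← Ideal.map_pow, ← hram, Ideal.map_span, Set.image_singleton]
      have : f ((p : ℕ) : 𝓞 F) = ((p : ℕ) : 𝓞 F) := map_natCast f p
      rw [RingHom.coe_coe] at *
      rw [this, hram]
    haveI hQp : (Ideal.map (f : 𝓞 F →+* 𝓞 F) P).IsPrime := by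
      have := Ideal.map_isPrime_of_equiv (I := P) f
      convert this using 2
      rfl
    have hQbot : Ideal.map (f : 𝓞 F →+* 𝓞 F) P ≠ ⊥ := by
      intro h
      apply hPbot
      rw [eq_bot_iff]
      intro y hy
      rw [Submodule.mem_bot]
      have hy2 : (f : 𝓞 F →+* 𝓞 F) y ∈ Ideal.map (f : 𝓞 F →+* 𝓞 F) P :=
        Ideal.mem_map_of_mem _ hy
      rw [h, Ideal.mem_bot] at hy2
      apply f.injective
      rw [_root_.map_zero]
      exact hy2
    have hQle : Ideal.map (f : 𝓞 F →+* 𝓞 F) P ≤ P :=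
      hP.le_of_pow_le (by rw [hQN]; exact Ideal.pow_le_self hNne)
    have hmap : Ideal.map (f : 𝓞 F →+* 𝓞 F) P = P :=
      (hQp.isMaximal hQbot).eq_of_le hP.ne_top hQle
    have hle : P ≤ Ideal.comap (f : 𝓞 F →+* 𝓞 F) P := by
      intro y hy
      show f y ∈ P
      rw [← hmap]
      exact Ideal.mem_map_of_mem _ hy
    have h4 := hend (Ideal.quotientMap P (f : 𝓞 F →+* 𝓞 F) hle) (Ideal.Quotient.mk P x)
    rwa [Ideal.quotientMap_mk] at h4
  -- every unit reduces to ±1 mod P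
  have key : ∀ u : (𝓞 F)ˣ, Ideal.Quotient.mk P (u : 𝓞 F) = 1 ∨
      Ideal.Quotient.mk P (u : 𝓞 F) = -1 := by
    intro u
    set c : 𝓞 F := ∏ σ : F ≃ₐ[ℚ] F, galRestrict ℤ ℚ F (𝓞 F) σ (u : 𝓞 F) with hc
    obtain ⟨m, hm⟩ : ∃ m : ℤ, c = algebraMap ℤ (𝓞 F) m :=
      ⟨_, prod_galRestrict_eq_norm ℤ ℚ F (𝓞 F) (u : 𝓞 F)⟩
    have hcu : IsUnit c := by
      rw [hc]
      exact Finset.prod_induction _ IsUnit (fun a b => IsUnit.mul) isUnit_one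
        (fun σ _ => u.isUnit.map ((galRestrict ℤ ℚ F (𝓞 F) σ).toAlgHom.toRingHom.toMonoidHom))
    have hmunit : IsUnit m := by
      have h1 : IsUnit (Algebra.norm ℤ c) := hcu.map (Algebra.norm ℤ (S := 𝓞 F))
      rw [hm, Algebra.norm_algebraMap_of_basis (Module.Free.chooseBasis ℤ (𝓞 F)), hdcard] at h1
      exact isUnit_of_dvd_unit (dvd_pow_self m hNne) h1
    have hm1 : m = 1 ∨ m = -1 := Int.isUnit_iff.mp hmunit
    have hmkc : Ideal.Quotient.mk P c = (Ideal.Quotient.mk P (u : 𝓞 F)) ^ N := by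
      rw [hc, map_prod]
      have : ∀ σ ∈ (Finset.univ : Finset (F ≃ₐ[ℚ] F)),
          Ideal.Quotient.mk P (galRestrict ℤ ℚ F (𝓞 F) σ (u : 𝓞 F)) =
          Ideal.Quotient.mk P (u : 𝓞 F) := fun σ _ => hfix σ _
      rw [Finset.prod_congr rfl this, Finset.prod_const, Finset.card_univ,
        ← Nat.card_eq_fintype_card, IsGalois.card_aut_eq_finrank, hdeg]
    have heq : Ideal.Quotient.mk P (u : 𝓞 F) = Ideal.Quotient.mk P c := by
      conv_lhs => rw [← hpow (Ideal.Quotient.mk P (u : 𝓞 F))]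
      rw [hmkc]
    rcases hm1 with h | h
    · left; rw [heq, hm, h]; simp
    · right; rw [heq, hm, h]; simp
  -- conclude
  have hab : Ideal.Quotient.mk P (lam : 𝓞 F) + Ideal.Quotient.mk P (mu : 𝓞 F) = 1 := by
    rw [← _root_.map_add, hsum, _root_.map_one]
  rcases key lam with h1 | h1 <;> rcases key mu with h2 | h2 <;> rw [h1, h2] at hab
  · exact one_ne_zero (α := 𝓞 F ⧸ P) (by linear_combination hab)
  · exact one_ne_zero (α := 𝓞 F ⧸ P) (by linear_combination -hab)
  · exact one_ne_zero (α := 𝓞 F ⧸ P) (by linear_combination -hab)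
  · have h3 : ((3 : ℕ) : 𝓞 F ⧸ P) = 0 := by push_cast; linear_combination -hab
    have hdvd : p ∣ 3 := (CharP.cast_eq_zero_iff (𝓞 F ⧸ P) p 3).mp h3
    exact hp3 ((Nat.prime_dvd_prime_iff_eq hp (by norm_num)).mp hdvd)
end

section
/- Let p ≥ 5 be prime and F/Q a Galois extension of degree p^n in which p is totally ramified and 2 is inert; write 𝔮 = 2O_F and S = {𝔮}. Then every solution (λ, μ) of λ + μ = 1 in S-units of F satisfies one of: (i) ord_𝔮(λ) = 1 and ord_𝔮(μ) = 0; (ii) ord_𝔮(λ) = 0 and ord_𝔮(μ) = 1; (iii) ord_𝔮(λ) = ord_𝔮(μ) = -1. -/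
set_option synthInstance.maxHeartbeats 1000000
set_option maxHeartbeats 4000000

open NumberField FractionalIdeal IsDedekindDomain

/-- p ≥ 5 prime, F/ℚ Galois of degree p^n, p totally ramified, 2 inert with
𝔮 = 2O_F.  Every solution of the {𝔮}-unit equation λ + μ = 1 has valuation
pattern (1,0), (0,1) or (-1,-1). -/
theorem stmt8 (p n : ℕ) (hp : p.Prime) (hp5 : 5 ≤ p) (hn : 1 ≤ n)
    (F : Type*) [Field F] [NumberField F] [IsGalois ℚ F]
    (hdeg : Module.finrank ℚ F = p ^ n)
    (P : Ideal (𝓞 F)) (hP : P.IsPrime)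
    (hram : Ideal.span {(p : 𝓞 F)} = P ^ (p ^ n))
    (Q : Ideal (𝓞 F)) (hQ : Q = Ideal.span {(2 : 𝓞 F)}) (hQprime : Q.IsPrime)
    (lam mu : F) (a b : ℤ)
    (ha : spanSingleton (nonZeroDivisors (𝓞 F)) lam
        = (Q : FractionalIdeal (nonZeroDivisors (𝓞 F)) F) ^ a)
    (hb : spanSingleton (nonZeroDivisors (𝓞 F)) mu
        = (Q : FractionalIdeal (nonZeroDivisors (𝓞 F)) F) ^ b)
    (hsum : lam + mu = 1) :
    (a = 1 ∧ b = 0) ∨ (a = 0 ∧ b = 1) ∨ (a = -1 ∧ b = -1) := by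
  have hpn : (p:ℕ) ^ n ≠ 0 := pow_ne_zero n hp.ne_zero
  have hQtop : Q ≠ ⊤ := hQprime.ne_top
  have hPtop : P ≠ ⊤ := hP.ne_top
  have hpP : ((p : ℕ) : 𝓞 F) ∈ P := by
    have h1 : ((p : ℕ) : 𝓞 F) ∈ Ideal.span {((p:ℕ) : 𝓞 F)} := Ideal.mem_span_singleton_self _
    rw [hram] at h1
    exact Ideal.pow_le_self hpn h1
  have hPbot : P ≠ ⊥ := by
    intro h
    rw [h, ← Ideal.zero_eq_bot, zero_pow hpn, Ideal.zero_eq_bot, Ideal.span_singleton_eq_bot] at hram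
    exact hp.ne_zero (Nat.cast_eq_zero.mp hram)
  have hPmax : P.IsMaximal := hP.isMaximal hPbot
  -- coprime integers cannot lie in P
  have h1P : ∀ k : ℤ, IsCoprime k (p:ℤ) → ((k : ℤ) : 𝓞 F) ∈ P → False := by
    intro k hk hkP
    obtain ⟨c, d, hcd⟩ := hk
    apply hPtop
    rw [Ideal.eq_top_iff_one]
    have h2 : ((c * k + d * p : ℤ) : 𝓞 F) ∈ P := by
      push_cast
      exact Ideal.add_mem _ (P.mul_mem_left _ hkP) (P.mul_mem_left _ (by exact_mod_cast hpP))
    rw [hcd] at h2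
    simpa using h2
  have hco2 : IsCoprime (2:ℤ) (p:ℤ) := by
    exact_mod_cast Nat.isCoprime_iff_coprime.mpr
      ((Nat.coprime_primes Nat.prime_two hp).mpr (by omega))
  have hco3 : IsCoprime (-3:ℤ) (p:ℤ) := by
    refine (Int.isCoprime_iff_gcd_eq_one.mpr ?_).neg_left
    have h3 : Nat.Coprime 3 p := (Nat.coprime_primes Nat.prime_three hp).mpr (by omega)
    simpa [Int.gcd] using h3
  have h2P : ((2 : 𝓞 F)) ∈ P → False := by
    intro h
    exact h1P 2 hco2 (by exact_mod_cast h)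
  -- the residue field of P has p elements
  have hcardQ : Nat.card (𝓞 F ⧸ P) = p := by
    have hb2 : Ideal.absNorm (Ideal.span {((p:ℕ) : 𝓞 F)}) = p ^ (p ^ n) := by
      rw [Ideal.absNorm_span_singleton]
      have h1 : ((p:ℕ) : 𝓞 F) = algebraMap ℤ (𝓞 F) ((p:ℕ):ℤ) := by push_cast; simp
      rw [h1]
      have hbasis := Module.Free.chooseBasis ℤ (𝓞 F)
      rw [Algebra.norm_algebraMap_of_basis hbasis]
      rw [← Module.finrank_eq_card_chooseBasisIndex, NumberField.RingOfIntegers.rank, hdeg]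
      simp [Int.natAbs_pow]
    rw [hram, map_pow] at hb2
    have h3 := Nat.pow_left_injective (pow_ne_zero n hp.ne_zero) hb2
    rw [← h3, Ideal.absNorm_apply, Submodule.cardQuot_apply]
  haveI : Finite (𝓞 F ⧸ P) := Nat.finite_of_card_ne_zero (by rw [hcardQ]; exact hp.ne_zero)
  letI : Fintype (𝓞 F ⧸ P) := Fintype.ofFinite _
  letI : Field (𝓞 F ⧸ P) := Ideal.Quotient.field P
  have hcard : Fintype.card (𝓞 F ⧸ P) = p := by rw [← Nat.card_eq_fintype_card, hcardQ]
  -- every residue class mod P comes from a natural number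
  have hsurj : ∀ y : 𝓞 F ⧸ P, ∃ m : ℕ, y = ((m : ℕ) : 𝓞 F ⧸ P) := by
    haveI : Fact p.Prime := ⟨hp⟩
    have hchar0 : ((p:ℕ) : 𝓞 F ⧸ P) = 0 := by
      rw [← map_natCast (Ideal.Quotient.mk P)]
      exact Ideal.Quotient.eq_zero_iff_mem.mpr hpP
    have hdvd : ringChar (𝓞 F ⧸ P) ∣ p := ringChar.dvd hchar0
    have hchar : ringChar (𝓞 F ⧸ P) = p := by
      rcases (Nat.Prime.eq_one_or_self_of_dvd hp _ hdvd) with h | h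
      · exact absurd h (CharP.ringChar_ne_one (R := 𝓞 F ⧸ P))
      · exact h
    haveI : CharP (𝓞 F ⧸ P) p := hchar ▸ ringChar.charP _
    let φ := ZMod.castHom (dvd_refl p) (𝓞 F ⧸ P)
    have hbij : Function.Bijective φ :=
      (Fintype.bijective_iff_injective_and_card φ).mpr ⟨φ.injective, by rw [ZMod.card, hcard]⟩
    intro y
    obtain ⟨x, hx⟩ := hbij.2 y
    refine ⟨x.val, ?_⟩
    rw [← hx]
    simp [φ, ZMod.natCast_val]
  -- Galois conjugation fixes P and residues mod P
  have hgal : ∀ (σ : F ≃ₐ[ℚ] F) (x : 𝓞 F), galRestrict ℤ ℚ F (𝓞 F) σ x - x ∈ P := by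
    intro σ x
    set τ := galRestrict ℤ ℚ F (𝓞 F) σ with hτ
    set τ' : 𝓞 F →+* 𝓞 F := ((τ : 𝓞 F ≃+* 𝓞 F) : 𝓞 F →+* 𝓞 F) with hτ'
    have hPprime' : (P.comap τ').IsPrime := hP.comap τ'
    have hmem : ((p:ℕ) : 𝓞 F) ∈ P.comap τ' := by
      rw [Ideal.mem_comap]
      show τ ((p:ℕ) : 𝓞 F) ∈ P
      rw [map_natCast]
      exact hpP
    have hle : P ≤ P.comap τ' := by
      have h2 : P ^ (p^n) ≤ P.comap τ' := by
        rw [← hram, Ideal.span_le]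
        simpa using hmem
      exact (Ideal.IsPrime.pow_le_iff hpn).mp h2
    have heqc : P = P.comap τ' := hPmax.eq_of_le hPprime'.ne_top hle
    obtain ⟨m, hm⟩ := hsurj (Ideal.Quotient.mk P x)
    have hxk : x - ((m:ℕ) : 𝓞 F) ∈ P := by
      rw [← Ideal.Quotient.eq, map_natCast]
      exact hm
    have h3 : τ (x - ((m:ℕ) : 𝓞 F)) ∈ P := Ideal.mem_comap.mp (heqc ▸ hxk)
    have h4 : τ x - ((m:ℕ) : 𝓞 F) ∈ P := by rwa [map_sub, map_natCast] at h3
    have h5 : τ x - x = (τ x - ((m:ℕ):𝓞 F)) - (x - ((m:ℕ):𝓞 F)) := by ring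
    rw [h5]
    exact Ideal.sub_mem _ h4 hxk
  -- the "norm" is congruent to the element mod P
  have hNP : ∀ x : 𝓞 F, (∏ σ : F ≃ₐ[ℚ] F, galRestrict ℤ ℚ F (𝓞 F) σ x) - x ∈ P := by
    have hcaut : Fintype.card (F ≃ₐ[ℚ] F) = p ^ n := by rw [← Nat.card_eq_fintype_card, IsGalois.card_aut_eq_finrank, hdeg]
    intro x
    rw [← Ideal.Quotient.eq, map_prod]
    have h1 : ∀ σ ∈ (Finset.univ : Finset (F ≃ₐ[ℚ] F)),
        Ideal.Quotient.mk P (galRestrict ℤ ℚ F (𝓞 F) σ x) = Ideal.Quotient.mk P x := by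
      intro σ _
      rw [Ideal.Quotient.eq]
      exact hgal σ x
    rw [Finset.prod_congr rfl h1, Finset.prod_const, Finset.card_univ, hcaut]
    calc (Ideal.Quotient.mk P x) ^ p ^ n
        = (Ideal.Quotient.mk P x) ^ Fintype.card (𝓞 F ⧸ P) ^ n := by rw [hcard]
      _ = Ideal.Quotient.mk P x := FiniteField.pow_card_pow n _
  -- norms of units are ±1
  have hNunit : ∀ u : (𝓞 F)ˣ, ∃ z : ℤ, (z = 1 ∨ z = -1) ∧
      (∏ σ : F ≃ₐ[ℚ] F, galRestrict ℤ ℚ F (𝓞 F) σ (u : 𝓞 F)) = algebraMap ℤ (𝓞 F) z := by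
    intro u
    obtain ⟨z, hz⟩ : ∃ z : ℤ,
        (∏ σ : F ≃ₐ[ℚ] F, galRestrict ℤ ℚ F (𝓞 F) σ (u : 𝓞 F)) = algebraMap ℤ (𝓞 F) z :=
      ⟨_, prod_galRestrict_eq_norm ℤ ℚ F (𝓞 F) (u : 𝓞 F)⟩
    refine ⟨z, ?_, hz⟩
    have hUnit : IsUnit (algebraMap ℤ (𝓞 F) z) := by
      rw [← hz]
      exact Finset.prod_induction _ IsUnit (fun _ _ => IsUnit.mul) isUnit_one
        (fun σ _ => u.isUnit.map (galRestrict ℤ ℚ F (𝓞 F) σ))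
    rw [← Int.isUnit_iff]
    obtain ⟨v, hv⟩ := hUnit
    have hz0 : z ≠ 0 := by
      rintro rfl
      rw [_root_.map_zero] at hv
      exact not_isUnit_zero (hv ▸ v.isUnit)
    have hvinv : (algebraMap ℤ (𝓞 F) z) * ↑v⁻¹ = 1 := by rw [← hv]; exact v.mul_inv
    have hF : ((z : ℤ) : F) * algebraMap (𝓞 F) F ↑v⁻¹ = 1 := by
      have h6 := congrArg (algebraMap (𝓞 F) F) hvinv
      rw [_root_.map_mul, _root_.map_one] at h6
      convert h6 using 2
      simp
    have hinvF : algebraMap (𝓞 F) F ↑v⁻¹ = algebraMap ℚ F ((z:ℚ)⁻¹) := by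
      have h1 : algebraMap ℚ F ((z:ℚ)⁻¹) = ((z:ℤ):F)⁻¹ := by
        rw [map_inv₀]
        norm_num
      rw [h1]
      exact eq_inv_of_mul_eq_one_left (by rw [mul_comm]; exact hF)
    have hint : IsIntegral ℤ ((z:ℚ)⁻¹) := by
      rw [← isIntegral_algebraMap_iff (algebraMap ℚ F).injective, ← hinvF]
      exact NumberField.RingOfIntegers.isIntegral_coe _
    obtain ⟨y, hy⟩ := IsIntegrallyClosed.isIntegral_iff.mp hint
    have hyz : y * z = 1 := by
      have h7 : ((y * z : ℤ) : ℚ) = 1 := by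
        push_cast
        rw [show ((y:ℤ):ℚ) = (z:ℚ)⁻¹ from by rw [← hy]; simp]
        field_simp
      exact_mod_cast h7
    exact IsUnit.of_mul_eq_one (a := z) y (by linarith [hyz])
  -- units congruent to 1 mod 4 are congruent to 1 mod P
  have hmod4 : ∀ u : (𝓞 F)ˣ, (u : 𝓞 F) - 1 ∈ Ideal.span {(4 : 𝓞 F)} → (u : 𝓞 F) - 1 ∈ P := by
    intro u hu
    obtain ⟨z, hz1, hz2⟩ := hNunit u
    set J : Ideal (𝓞 F) := Ideal.span {(4 : 𝓞 F)} with hJ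
    have hfac : ∀ σ : F ≃ₐ[ℚ] F, galRestrict ℤ ℚ F (𝓞 F) σ (u : 𝓞 F) - 1 ∈ J := by
      intro σ
      obtain ⟨t, ht⟩ := Ideal.mem_span_singleton'.mp hu
      have h0 : galRestrict ℤ ℚ F (𝓞 F) σ (u:𝓞 F) - 1
          = galRestrict ℤ ℚ F (𝓞 F) σ ((u:𝓞 F) - 1) := by rw [map_sub, _root_.map_one]
      rw [h0, ← ht, _root_.map_mul]
      have h4 : (galRestrict ℤ ℚ F (𝓞 F) σ) (4:𝓞 F) = 4 := map_ofNat _ 4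
      rw [h4]
      exact Ideal.mem_span_singleton'.mpr ⟨galRestrict ℤ ℚ F (𝓞 F) σ t, rfl⟩
    have hNmod : (∏ σ : F ≃ₐ[ℚ] F, galRestrict ℤ ℚ F (𝓞 F) σ (u : 𝓞 F)) - 1 ∈ J := by
      rw [← Ideal.Quotient.eq, map_prod]
      rw [Finset.prod_congr rfl (fun σ _ => (Ideal.Quotient.eq).mpr (hfac σ))]
      simp
    rcases hz1 with rfl | rfl
    · have h1 : (∏ σ : F ≃ₐ[ℚ] F, galRestrict ℤ ℚ F (𝓞 F) σ (u : 𝓞 F)) = 1 := by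
        rw [hz2]; simp
      have h2 := hNP (u : 𝓞 F)
      rw [h1] at h2
      have h3 : (u:𝓞 F) - 1 = -((1:𝓞 F) - u) := by ring
      rw [h3]
      exact neg_mem h2
    · exfalso
      rw [hz2] at hNmod
      have h3 : (-2 : 𝓞 F) ∈ J := by
        have h8 : (algebraMap ℤ (𝓞 F) (-1 : ℤ)) - 1 = (-2 : 𝓞 F) := by simp; ring
        rwa [h8] at hNmod
      obtain ⟨t, ht⟩ := Ideal.mem_span_singleton'.mp h3
      have h4 : (2 : 𝓞 F) * (2 * t + 1) = 0 := by linear_combination ht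
      have h5 : (2 * t + 1 : 𝓞 F) = 0 := by
        rcases mul_eq_zero.mp h4 with h | h
        · exact absurd h two_ne_zero
        · exact h
      have h6 : (-t) * (2 : 𝓞 F) = 1 := by linear_combination -h5
      apply hQtop
      rw [Ideal.eq_top_iff_one, hQ]
      exact Ideal.mem_span_singleton'.mpr ⟨-t, h6⟩
  -- unit congruences mod P
  have hUP : ∀ u : (𝓞 F)ˣ, ∃ z : ℤ, (z = 1 ∨ z = -1) ∧ (u : 𝓞 F) - algebraMap ℤ (𝓞 F) z ∈ P := by
    intro u
    obtain ⟨z, hz1, hz2⟩ := hNunit u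
    refine ⟨z, hz1, ?_⟩
    have h1 := hNP (u : 𝓞 F)
    rw [hz2] at h1
    have h2 : (u : 𝓞 F) - algebraMap ℤ (𝓞 F) z = -(algebraMap ℤ (𝓞 F) z - u) := by ring
    rw [h2]
    exact neg_mem h1
  -- units cannot lie in P or Q
  have hunitP : ∀ u : (𝓞 F)ˣ, (u : 𝓞 F) ∈ P → False := by
    intro u h
    apply hPtop
    rw [Ideal.eq_top_iff_one]
    have h1 : (↑u⁻¹ * ↑u : 𝓞 F) ∈ P := P.mul_mem_left _ h
    rwa [u.inv_mul] at h1
  have hunitQ : ∀ u : (𝓞 F)ˣ, (u : 𝓞 F) ∈ Q → False := by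
    intro u h
    apply hQtop
    rw [Ideal.eq_top_iff_one]
    have h1 : (↑u⁻¹ * ↑u : 𝓞 F) ∈ Q := Q.mul_mem_left _ h
    rwa [u.inv_mul] at h1
  -- decompose lam and mu
  have hinj : Function.Injective (algebraMap (𝓞 F) F) := IsFractionRing.injective (𝓞 F) F
  have h2F : algebraMap (𝓞 F) F (2 : 𝓞 F) = (2 : F) := map_ofNat _ 2
  have h2ne : (2 : F) ≠ 0 := two_ne_zero
  have h2ne' : (2 : 𝓞 F) ≠ 0 := by
    intro h
    apply h2ne
    rw [← h2F, h, _root_.map_zero]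
  have hdecomp : ∀ (x : F) (c : ℤ),
      spanSingleton (nonZeroDivisors (𝓞 F)) x
        = (Q : FractionalIdeal (nonZeroDivisors (𝓞 F)) F) ^ c →
      ∃ u : (𝓞 F)ˣ, x = algebraMap (𝓞 F) F (u : 𝓞 F) * (2 : F) ^ c := by
    intro x c h
    rw [hQ, coeIdeal_span_singleton, h2F] at h
    have hzpow : (spanSingleton (nonZeroDivisors (𝓞 F)) (2:F)) ^ c
        = spanSingleton (nonZeroDivisors (𝓞 F)) ((2:F) ^ c) := by
      rcases c with m | m
      · rw [Int.ofNat_eq_coe, zpow_natCast, zpow_natCast, spanSingleton_pow]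
      · rw [zpow_negSucc, zpow_negSucc, spanSingleton_pow, inv_eq_one_div,
          one_div_spanSingleton, inv_eq_one_div]
    rw [hzpow] at h
    obtain ⟨z, hz⟩ := spanSingleton_eq_spanSingleton.mp h
    refine ⟨z⁻¹, ?_⟩
    have hz' : algebraMap (𝓞 F) F (z : 𝓞 F) * x = (2:F) ^ c := by
      rw [← hz, Units.smul_def, Algebra.smul_def]
    have h9 : algebraMap (𝓞 F) F ((z⁻¹ : (𝓞 F)ˣ) : 𝓞 F) * (algebraMap (𝓞 F) F (z : 𝓞 F) * x)
        = algebraMap (𝓞 F) F ((z⁻¹ : (𝓞 F)ˣ) : 𝓞 F) * (2:F)^c := by rw [hz']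
    rw [← mul_assoc, ← _root_.map_mul, Units.inv_mul, _root_.map_one, one_mul] at h9
    exact h9
  obtain ⟨u, hu⟩ := hdecomp lam a ha
  obtain ⟨w, hw⟩ := hdecomp mu b hb
  clear ha hb
  -- the member of P arising from two unit congruences
  have hzP : ∀ (z₁ z₂ : ℤ), (z₁ = 1 ∨ z₁ = -1) → (z₂ = 1 ∨ z₂ = -1) →
      ((z₁ + z₂ - 1 : ℤ) : 𝓞 F) ∈ P → False := by
    intro z₁ z₂ h1 h2 hmem
    rcases h1 with rfl | rfl <;> rcases h2 with rfl | rfl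
    · exact h1P 1 isCoprime_one_left (by norm_num at hmem ⊢; exact hmem)
    · exact h1P (-1) isCoprime_one_left.neg_left (by norm_num at hmem ⊢; exact hmem)
    · exact h1P (-1) isCoprime_one_left.neg_left (by norm_num at hmem ⊢; exact hmem)
    · exact h1P (-3) hco3 (by norm_num at hmem ⊢; exact hmem)
  -- main case analysis
  rcases a with s | s <;> rcases b with t | t
  · -- a = s ≥ 0, b = t ≥ 0
    have hlam : lam = algebraMap (𝓞 F) F (↑u * 2^s) := by
      rw [hu, Int.ofNat_eq_coe, zpow_natCast, _root_.map_mul, map_pow, h2F]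
    have hmu : mu = algebraMap (𝓞 F) F (↑w * 2^t) := by
      rw [hw, Int.ofNat_eq_coe, zpow_natCast, _root_.map_mul, map_pow, h2F]
    have heq : (↑u * 2^s + ↑w * 2^t : 𝓞 F) = 1 := by
      apply hinj
      rw [_root_.map_add, _root_.map_one, ← hlam, ← hmu]
      exact hsum
    rcases Nat.eq_zero_or_pos s with hs | hs <;> rcases Nat.eq_zero_or_pos t with ht | ht
    · -- s = 0, t = 0 : impossible (exceptional unit)
      exfalso
      subst hs ht
      simp only [pow_zero, mul_one] at heq
      obtain ⟨z₁, hz1, hz1P⟩ := hUP u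
      obtain ⟨z₂, hz2, hz2P⟩ := hUP w
      apply hzP z₁ z₂ hz1 hz2
      have hcast : ((z₁ + z₂ - 1 : ℤ) : 𝓞 F)
          = -(((u:𝓞 F) - algebraMap ℤ (𝓞 F) z₁) + ((w:𝓞 F) - algebraMap ℤ (𝓞 F) z₂))
            + ((↑u + ↑w : 𝓞 F) - 1) := by
        push_cast
        simp only [algebraMap_int_eq, eq_intCast]
        push_cast
        ring
      rw [hcast, heq, sub_self, add_zero]
      exact neg_mem (Ideal.add_mem _ hz1P hz2P)
    · -- s = 0, t ≥ 1 : must have t = 1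
      subst hs
      rw [pow_zero, mul_one] at heq
      have ht1 : t = 1 := by
        by_contra hne
        have ht2 : 2 ≤ t := by omega
        have hpow : (2:𝓞 F)^t = 2^(t-2) * 4 := by
          have h9 : t = (t-2) + 2 := by omega
          rw [h9, pow_add]
          norm_num
        have hu4 : (u : 𝓞 F) - 1 ∈ Ideal.span {(4:𝓞 F)} := by
          refine Ideal.mem_span_singleton'.mpr ⟨-(↑w * 2^(t-2)), ?_⟩
          linear_combination -heq + (w : 𝓞 F) * hpow
        have huP := hmod4 u hu4
        have hwP : (↑w * 2^t : 𝓞 F) ∈ P := by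
          have h9 : (↑w * 2^t : 𝓞 F) = -((u:𝓞 F) - 1) := by linear_combination heq
          rw [h9]
          exact neg_mem huP
        rcases hP.mem_or_mem hwP with h | h
        · exact hunitP w h
        · exact h2P (hP.mem_of_pow_mem t h)
      subst ht1
      right; left
      exact ⟨rfl, rfl⟩
    · -- s ≥ 1, t = 0 : must have s = 1
      subst ht
      rw [pow_zero, mul_one] at heq
      have hs1 : s = 1 := by
        by_contra hne
        have hs2 : 2 ≤ s := by omega
        have hpow : (2:𝓞 F)^s = 2^(s-2) * 4 := by
          have h9 : s = (s-2) + 2 := by omega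
          rw [h9, pow_add]
          norm_num
        have hw4 : (w : 𝓞 F) - 1 ∈ Ideal.span {(4:𝓞 F)} := by
          refine Ideal.mem_span_singleton'.mpr ⟨-(↑u * 2^(s-2)), ?_⟩
          linear_combination -heq + (u : 𝓞 F) * hpow
        have hwP := hmod4 w hw4
        have huPm : (↑u * 2^s : 𝓞 F) ∈ P := by
          have h9 : (↑u * 2^s : 𝓞 F) = -((w:𝓞 F) - 1) := by linear_combination heq
          rw [h9]
          exact neg_mem hwP
        rcases hP.mem_or_mem huPm with h | h
        · exact hunitP u h
        · exact h2P (hP.mem_of_pow_mem s h)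
      subst hs1
      left
      exact ⟨rfl, rfl⟩
    · -- s ≥ 1, t ≥ 1 : impossible
      exfalso
      apply hQtop
      rw [Ideal.eq_top_iff_one, hQ]
      rw [← heq]
      refine Ideal.add_mem _ ?_ ?_
      · exact Ideal.mem_span_singleton.mpr
          (Dvd.dvd.mul_left (dvd_pow_self 2 (by omega : s ≠ 0)) _)
      · exact Ideal.mem_span_singleton.mpr
          (Dvd.dvd.mul_left (dvd_pow_self 2 (by omega : t ≠ 0)) _)
  · -- a = s ≥ 0, b = -(t+1) < 0 : impossible
    exfalso
    have hlam : lam = algebraMap (𝓞 F) F (↑u * 2^s) := by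
      rw [hu, Int.ofNat_eq_coe, zpow_natCast, _root_.map_mul, map_pow, h2F]
    have hpne : ((2:F)^(t+1)) ≠ 0 := pow_ne_zero _ h2ne
    have h1 : algebraMap (𝓞 F) F (↑w) = mu * (2:F)^(t+1) := by
      rw [hw, zpow_negSucc]
      field_simp
    have h2 : algebraMap (𝓞 F) F (↑w) = algebraMap (𝓞 F) F ((1 - ↑u * 2^s) * 2^(t+1)) := by
      rw [h1, show mu = 1 - lam from by linear_combination hsum, hlam]
      simp only [_root_.map_mul, map_sub, _root_.map_one, map_pow, h2F]
    have h3 : (↑w : 𝓞 F) = (1 - ↑u * 2^s) * 2^(t+1) := hinj h2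
    apply hunitQ w
    rw [hQ, h3]
    exact Ideal.mem_span_singleton.mpr
      (Dvd.dvd.mul_left (dvd_pow_self 2 (Nat.succ_ne_zero t)) _)
  · -- a = -(s+1) < 0, b = t ≥ 0 : impossible
    exfalso
    have hmu : mu = algebraMap (𝓞 F) F (↑w * 2^t) := by
      rw [hw, Int.ofNat_eq_coe, zpow_natCast, _root_.map_mul, map_pow, h2F]
    have hpne : ((2:F)^(s+1)) ≠ 0 := pow_ne_zero _ h2ne
    have h1 : algebraMap (𝓞 F) F (↑u) = lam * (2:F)^(s+1) := by
      rw [hu, zpow_negSucc]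
      field_simp
    have h2 : algebraMap (𝓞 F) F (↑u) = algebraMap (𝓞 F) F ((1 - ↑w * 2^t) * 2^(s+1)) := by
      rw [h1, show lam = 1 - mu from by linear_combination hsum, hmu]
      simp only [_root_.map_mul, map_sub, _root_.map_one, map_pow, h2F]
    have h3 : (↑u : 𝓞 F) = (1 - ↑w * 2^t) * 2^(s+1) := hinj h2
    apply hunitQ u
    rw [hQ, h3]
    exact Ideal.mem_span_singleton.mpr
      (Dvd.dvd.mul_left (dvd_pow_self 2 (Nat.succ_ne_zero s)) _)
  · -- a = -(s+1), b = -(t+1)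
    have hpnes : ((2:F)^(s+1)) ≠ 0 := pow_ne_zero _ h2ne
    have hpnet : ((2:F)^(t+1)) ≠ 0 := pow_ne_zero _ h2ne
    have h1 : algebraMap (𝓞 F) F (↑u) = lam * (2:F)^(s+1) := by
      rw [hu, zpow_negSucc]
      field_simp
    have h2 : algebraMap (𝓞 F) F (↑w) = mu * (2:F)^(t+1) := by
      rw [hw, zpow_negSucc]
      field_simp
    have heq : (↑u * 2^(t+1) + ↑w * 2^(s+1) : 𝓞 F) = 2^(s+1) * 2^(t+1) := by
      apply hinj
      simp only [_root_.map_add, _root_.map_mul, map_pow, h2F, h1, h2]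
      ring_nf
      linear_combination ((2:F)^(s+1) * (2:F)^(t+1)) * hsum
    rcases lt_trichotomy s t with hst | hst | hst
    · -- s < t : impossible
      exfalso
      have hpid : (2:𝓞 F)^(t+1) = 2^(t-s) * 2^(s+1) := by
        have h9 : t + 1 = (t-s) + (s+1) := by omega
        rw [h9, pow_add]
      have hkey : (2:𝓞 F)^(s+1) * ↑w = (2:𝓞 F)^(s+1) * (2^(t+1) - ↑u * 2^(t-s)) := by
        linear_combination heq - (↑u : 𝓞 F) * hpid
      have hw2 : (↑w : 𝓞 F) = 2^(t+1) - ↑u * 2^(t-s) :=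
        mul_left_cancel₀ (pow_ne_zero _ h2ne') hkey
      apply hunitQ w
      rw [hQ, hw2]
      refine Ideal.sub_mem _ ?_ ?_
      · exact Ideal.mem_span_singleton.mpr (dvd_pow_self 2 (Nat.succ_ne_zero t))
      · exact Ideal.mem_span_singleton.mpr
          (Dvd.dvd.mul_left (dvd_pow_self 2 (by omega : t - s ≠ 0)) _)
    · -- s = t : then s = 0
      subst hst
      have hkey : (2:𝓞 F)^(s+1) * (↑u + ↑w) = (2:𝓞 F)^(s+1) * 2^(s+1) := by
        linear_combination heq
      have huw : (↑u + ↑w : 𝓞 F) = 2^(s+1) :=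
        mul_left_cancel₀ (pow_ne_zero _ h2ne') hkey
      rcases Nat.eq_zero_or_pos s with hs | hs
      · subst hs
        right; right
        exact ⟨rfl, rfl⟩
      · exfalso
        have hps : (2:𝓞 F)^(s+1) = 2^(s-1) * 4 := by
          have h9 : s + 1 = (s-1) + 2 := by omega
          rw [h9, pow_add]
          norm_num
        set v : (𝓞 F)ˣ := (-u) * w⁻¹ with hvdef
        have hv : (v : 𝓞 F) = -(↑u) * ↑w⁻¹ := by
          rw [hvdef, Units.val_mul, Units.val_neg]
        have winv : (↑w⁻¹ * ↑w : 𝓞 F) = 1 := w.inv_mul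
        have wmul : (↑w * ↑w⁻¹ : 𝓞 F) = 1 := w.mul_inv
        have hv1 : (v:𝓞 F) - 1 = -(↑w⁻¹) * (↑u + ↑w) := by
          rw [hv]
          linear_combination winv
        have hv4 : (v:𝓞 F) - 1 ∈ Ideal.span {(4:𝓞 F)} := by
          refine Ideal.mem_span_singleton'.mpr ⟨-(↑w⁻¹) * 2^(s-1), ?_⟩
          rw [hv1, huw, hps]
          ring
        have hvP := hmod4 v hv4
        have huwP : (↑u + ↑w : 𝓞 F) ∈ P := by
          have h9 : (↑u + ↑w : 𝓞 F) = -(↑w) * ((v:𝓞 F) - 1) := by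
            rw [hv]
            linear_combination -(↑u : 𝓞 F) * wmul
          rw [h9]
          exact P.mul_mem_left _ hvP
        rw [huw] at huwP
        exact h2P (hP.mem_of_pow_mem (s+1) huwP)
    · -- t < s : impossible
      exfalso
      have hpid : (2:𝓞 F)^(s+1) = 2^(s-t) * 2^(t+1) := by
        have h9 : s + 1 = (s-t) + (t+1) := by omega
        rw [h9, pow_add]
      have hkey : (2:𝓞 F)^(t+1) * ↑u = (2:𝓞 F)^(t+1) * (2^(s+1) - ↑w * 2^(s-t)) := by
        linear_combination heq - (↑w : 𝓞 F) * hpid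
      have hu2 : (↑u : 𝓞 F) = 2^(s+1) - ↑w * 2^(s-t) :=
        mul_left_cancel₀ (pow_ne_zero _ h2ne') hkey
      apply hunitQ u
      rw [hQ, hu2]
      refine Ideal.sub_mem _ ?_ ?_
      · exact Ideal.mem_span_singleton.mpr (dvd_pow_self 2 (Nat.succ_ne_zero s))
      · exact Ideal.mem_span_singleton.mpr
          (Dvd.dvd.mul_left (dvd_pow_self 2 (by omega : s - t ≠ 0)) _)
end

section
/- Let p ≥ 5 be prime and F/Q a Galois extension of degree p^n with p totally ramified and 2 inert, 𝔮 = 2O_F. If λ, μ are {𝔮}-units with λ + μ = 1 and ord_𝔮(λ) ≥ 2, a contradiction follows; i.e., no such solution has ord_𝔮(λ) ≥ 2. -/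
open NumberField FractionalIdeal IsDedekindDomain

-- auxiliary: a ring hom of a ring of prime cardinality is the identity
lemma ringHom_fixed {k : Type*} [CommRing k] [Fintype k] {p : ℕ} (hp : p.Prime)
    (hcard : Fintype.card k = p) (f : k →+* k) (y : k) : f y = y := by
  let e := ZMod.ringEquivOfPrime k hp hcard
  obtain ⟨z, rfl⟩ := e.surjective y
  have : f.comp (e : ZMod p →+* k) = (e : ZMod p →+* k) := RingHom.ext_zmod _ _
  exact congrFun (congrArg DFunLike.coe this) z

-- auxiliary: in a finite residue field of cardinality p, x ^ p ^ n = 1 implies x = 1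
lemma pow_card_fix {R : Type*} [CommRing R] (P : Ideal R) (hPmax : P.IsMaximal)
    [Fintype (R ⧸ P)] {p n : ℕ} (hp : p.Prime) (hcard : Fintype.card (R ⧸ P) = p)
    (x : R ⧸ P) (hx : x ^ p ^ n = 1) : x = 1 := by
  letI : Field (R ⧸ P) := Ideal.Quotient.field P
  calc x = x ^ (Fintype.card (R ⧸ P)) ^ n := (FiniteField.pow_card_pow n x).symm
    _ = 1 := by rw [hcard]; exact hx


set_option maxHeartbeats 1000000 in
set_option synthInstance.maxHeartbeats 200000 in
/-- p ≥ 5 prime, F/ℚ Galois of degree p^n, p totally ramified, 2 inert with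
𝔮 = 2O_F.  Every solution of the {𝔮}-unit equation λ + μ = 1 has valuation
pattern (1,0), (0,1) or (-1,-1). -/
theorem stmt9 (p n : ℕ) (hp : p.Prime) (hp5 : 5 ≤ p) (hn : 1 ≤ n)
    (F : Type*) [Field F] [NumberField F] [IsGalois ℚ F]
    (hdeg : Module.finrank ℚ F = p ^ n)
    (P : Ideal (𝓞 F)) (hP : P.IsPrime)
    (hram : Ideal.span {(p : 𝓞 F)} = P ^ (p ^ n))
    (Q : Ideal (𝓞 F)) (hQ : Q = Ideal.span {(2 : 𝓞 F)}) (hQprime : Q.IsPrime)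
    (lam mu : F) (a b : ℤ)
    (ha : spanSingleton (nonZeroDivisors (𝓞 F)) lam
        = (Q : FractionalIdeal (nonZeroDivisors (𝓞 F)) F) ^ a)
    (hb : spanSingleton (nonZeroDivisors (𝓞 F)) mu
        = (Q : FractionalIdeal (nonZeroDivisors (𝓞 F)) F) ^ b)
    (hsum : lam + mu = 1) :
    ¬ 2 ≤ a := by
  intro ha2
  have hQtop : Q ≠ ⊤ := hQprime.ne_top
  have h2ne : (2 : (𝓞 F)) ≠ 0 := by
    intro h
    have : (2 : F) = 0 := by exact_mod_cast congrArg (algebraMap (𝓞 F) F) h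
    norm_num at this
  have hQbot : Q ≠ ⊥ := by
    rw [hQ, Ne, Ideal.span_singleton_eq_bot]; exact h2ne
  have hQF : (Q : FractionalIdeal (nonZeroDivisors (𝓞 F)) F) ≠ 0 := by
    rwa [Ne, coeIdeal_eq_zero]
  -- λ is an algebraic integer l
  set k := a.toNat with hk
  have hak : a = (k : ℤ) := (Int.toNat_of_nonneg (by omega)).symm
  have hk2 : 2 ≤ k := by omega
  have hQa : (Q : FractionalIdeal (nonZeroDivisors (𝓞 F)) F) ^ a = ((Q ^ k : Ideal (𝓞 F)) :
      FractionalIdeal (nonZeroDivisors (𝓞 F)) F) := by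
    rw [hak, zpow_natCast, coeIdeal_pow]
  have hlam_mem : lam ∈ ((Q ^ k : Ideal (𝓞 F)) : FractionalIdeal (nonZeroDivisors (𝓞 F)) F) := by
    rw [← hQa, ← ha]
    exact mem_spanSingleton_self _ _
  rw [mem_coeIdeal] at hlam_mem
  obtain ⟨l, hlQ, hlcoe⟩ := hlam_mem
  have hspan_l : (Ideal.span {l} : Ideal (𝓞 F)) = Q ^ k := by
    refine (coeIdeal_inj (K := F)).mp ?_
    rw [coeIdeal_span_singleton, hlcoe, ha, hQa]
  -- μ corresponds to the integer m = 1 - l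
  set m : (𝓞 F) := 1 - l with hm
  have hmcoe : algebraMap (𝓞 F) F m = mu := by
    have : algebraMap (𝓞 F) F m = 1 - lam := by
      rw [hm, map_sub, _root_.map_one, hlcoe]
    rw [this]; linear_combination -hsum
  have hspan_m : ((Ideal.span {m} : Ideal (𝓞 F)) : FractionalIdeal (nonZeroDivisors (𝓞 F)) F)
      = (Q : FractionalIdeal (nonZeroDivisors (𝓞 F)) F) ^ b := by
    rw [coeIdeal_span_singleton, hmcoe, hb]
  have hlQ1 : l ∈ Q := (Ideal.pow_le_self (by omega)) hlQ
  have hmQ : m ∉ Q := by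
    intro hmem
    have : (1 : (𝓞 F)) ∈ Q := by
      have := Q.add_mem hmem hlQ1
      simpa [hm] using this
    exact hQtop (Q.eq_top_of_isUnit_mem this isUnit_one)
  -- b = 0 and m is a unit
  have hb0 : b = 0 := by
    rcases lt_trichotomy b 0 with hblt | hbeq | hbgt
    · exfalso
      set c := (-b).toNat with hc
      have hbc : b + (c : ℤ) = 0 := by omega
      have : ((Ideal.span {m} * Q ^ c : Ideal (𝓞 F)) : FractionalIdeal (nonZeroDivisors (𝓞 F)) F) = 1 := by
        rw [coeIdeal_mul, hspan_m, coeIdeal_pow, ← zpow_natCast (Q : FractionalIdeal (nonZeroDivisors (𝓞 F)) F) c,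
          ← zpow_add₀ hQF, hbc, zpow_zero]
      have htop : (Ideal.span {m} * Q ^ c : Ideal (𝓞 F)) = ⊤ := by
        refine (coeIdeal_inj (K := F)).mp ?_
        rw [this, coeIdeal_top]
      have hQc : (Q ^ c : Ideal (𝓞 F)) = ⊤ := top_le_iff.mp (htop ▸ Ideal.mul_le_right)
      have : Q = ⊤ := top_le_iff.mp ((hQc ▸ Ideal.pow_le_self (by omega) : (⊤ : Ideal (𝓞 F)) ≤ Q))
      exact hQtop this
    · exact hbeq
    · exfalso
      set c := b.toNat with hc
      have hbc : b = (c : ℤ) := by omega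
      have : (Ideal.span {m} : Ideal (𝓞 F)) = Q ^ c := by
        refine (coeIdeal_inj (K := F)).mp ?_
        rw [hspan_m, hbc, zpow_natCast, coeIdeal_pow]
      have : m ∈ Q := by
        have hm' : m ∈ Q ^ c := this ▸ Ideal.mem_span_singleton_self m
        exact Ideal.pow_le_self (by omega) hm'
      exact hmQ this
  have hm_unit : IsUnit m := by
    rw [← Ideal.span_singleton_eq_top]
    refine (coeIdeal_inj (K := F)).mp ?_
    rw [hspan_m, hb0, zpow_zero, coeIdeal_top]
  clear hspan_m hmcoe hlcoe
  -- l is divisible by 4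
  have hl4 : l ∈ Ideal.span {(4 : (𝓞 F))} := by
    have : Q ^ k ≤ Q ^ 2 := Ideal.pow_le_pow_right hk2
    have h2 : Q ^ 2 = Ideal.span {(4 : (𝓞 F))} := by
      rw [hQ, Ideal.span_singleton_pow]
      norm_num
    exact h2 ▸ this hlQ
  -- the Galois conjugates of m
  set τ : (F ≃ₐ[ℚ] F) → ((𝓞 F) ≃ₐ[ℤ] (𝓞 F)) := fun σ => galRestrict ℤ ℚ F (𝓞 F) σ with hτ
  set N : ℤ := Algebra.norm ℤ m with hN
  have hinj : Function.Injective (algebraMap (𝓞 F) F) := IsFractionRing.injective (𝓞 F) F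
  have hprod : (∏ σ : F ≃ₐ[ℚ] F, τ σ m) = (N : (𝓞 F)) := by
    apply hinj
    rw [map_prod]
    have h1 : ∀ σ : F ≃ₐ[ℚ] F, algebraMap (𝓞 F) F (τ σ m) = σ (algebraMap (𝓞 F) F m) := fun σ =>
      algebraMap_galRestrict_apply (A := ℤ) σ m
    simp_rw [h1]
    rw [← Algebra.norm_eq_prod_automorphisms, ← Algebra.coe_norm_int]
    rw [map_intCast, map_intCast]
  -- each conjugate is ≡ 1 mod 4
  have hconj : ∀ σ : F ≃ₐ[ℚ] F, Ideal.Quotient.mk (Ideal.span {(4:(𝓞 F))}) (τ σ m) = 1 := by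
    intro σ
    obtain ⟨x, hx⟩ := Ideal.mem_span_singleton'.mp hl4
    have h4 : τ σ (4 : (𝓞 F)) = 4 := by
      rw [show ((4:(𝓞 F))) = ((4:ℕ):(𝓞 F)) by norm_num, map_natCast]
    have h1 : τ σ m - 1 = (- τ σ x) * 4 := by
      rw [hm, ← hx, _root_.map_sub, _root_.map_one, _root_.map_mul, h4]
      ring
    have hmem : τ σ m - 1 ∈ Ideal.span {(4:(𝓞 F))} :=
      Ideal.mem_span_singleton'.mpr ⟨- τ σ x, h1.symm⟩
    have := Ideal.Quotient.eq.mpr hmem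
    simpa using this
  -- the norm N is ≡ 1 mod 4, and is a unit, hence N = 1
  have hNunit : IsUnit N := hm_unit.map (Algebra.norm ℤ)
  have hN1 : N = 1 := by
    rcases Int.isUnit_iff.mp hNunit with h | h
    · exact h
    · exfalso
      have : Ideal.Quotient.mk (Ideal.span {(4:(𝓞 F))}) (N : (𝓞 F)) = 1 := by
        rw [← hprod, map_prod]
        simp_rw [hconj]
        simp
      rw [h] at this
      have hneg : ((-1 : ℤ) : (𝓞 F)) = -1 := by push_cast; ring
      rw [hneg] at this
      have hmem : (-1 : (𝓞 F)) - 1 ∈ Ideal.span {(4:(𝓞 F))} := by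
        apply Ideal.Quotient.eq.mp
        rw [this]
        simp
      obtain ⟨x, hx⟩ := Ideal.mem_span_singleton'.mp hmem
      have hzero : (2 : (𝓞 F)) * (2 * x + 1) = 0 := by linear_combination hx
      rcases mul_eq_zero.mp hzero with h' | h'
      · exact h2ne h'
      · have h2u : IsUnit (2 : (𝓞 F)) := IsUnit.of_mul_eq_one (-x) (by linear_combination -h')
        exact hQtop (by rw [hQ, Ideal.span_singleton_eq_top]; exact h2u)
  rw [hN1] at hprod
  -- P has residue field of cardinality p
  have hPbot : P ≠ ⊥ := by
    intro h
    have : Ideal.span {(p : (𝓞 F))} = ⊥ := by rw [hram, h, ← Ideal.zero_eq_bot, zero_pow (pow_ne_zero n (show (p:ℕ) ≠ 0 by omega))]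
    rw [Ideal.span_singleton_eq_bot] at this
    have : ((p:ℕ) : F) = 0 := by exact_mod_cast congrArg (algebraMap (𝓞 F) F) this
    rw [Nat.cast_eq_zero] at this
    omega
  have habs : Ideal.absNorm P = p := by
    have h1 : Ideal.absNorm (Ideal.span {(p : (𝓞 F))}) = p ^ (p ^ n) := by
      rw [Ideal.absNorm_span_singleton]
      have : (p : (𝓞 F)) = algebraMap ℤ (𝓞 F) (p : ℤ) := by push_cast; ring
      rw [this]
      rw [Algebra.norm_algebraMap_of_basis (Module.Free.chooseBasis ℤ (𝓞 F))]
      rw [← Module.finrank_eq_card_chooseBasisIndex]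
      rw [RingOfIntegers.rank, hdeg]
      push_cast
      simp [Int.natAbs_pow]
    have h2 : Ideal.absNorm P ^ (p ^ n) = p ^ (p ^ n) := by
      rw [← map_pow, ← hram, h1]
    exact Nat.pow_left_injective (by positivity) h2
  haveI : Fintype ((𝓞 F) ⧸ P) := @Fintype.ofFinite _ (Ideal.finiteQuotientOfFreeOfNeBot P hPbot)
  have hcard : Fintype.card ((𝓞 F) ⧸ P) = p := by
    rw [← Nat.card_eq_fintype_card, ← Submodule.cardQuot_apply, ← Ideal.absNorm_apply, habs]
  haveI hPmax : P.IsMaximal := Ideal.IsPrime.isMaximal hP hPbot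
  -- each automorphism preserves P and acts trivially on (𝓞 F)/P
  have hfix : ∀ (σ : F ≃ₐ[ℚ] F) (x : (𝓞 F)),
      Ideal.Quotient.mk P (τ σ x) = Ideal.Quotient.mk P x := by
    intro σ
    set ρ : (𝓞 F) ≃+* (𝓞 F) := (τ σ : (𝓞 F) ≃+* (𝓞 F)) with hρ
    have hmapP : Ideal.map ρ P = P := by
      have hsp : Ideal.map ρ (Ideal.span {(p : (𝓞 F))}) = Ideal.span {(p : (𝓞 F))} := by
        rw [Ideal.map_span, Set.image_singleton, map_natCast]
      have heq : (Ideal.map ρ P) ^ (p ^ n) = P ^ (p ^ n) := by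
        rw [← Ideal.map_pow, ← hram, hsp, hram]
      haveI hPm : (Ideal.map ρ P).IsPrime := Ideal.map_isPrime_of_equiv ρ
      have le1 : Ideal.map ρ P ≤ P := hP.le_of_pow_le (le_of_eq_of_le heq
        (Ideal.pow_le_self (pow_ne_zero n (show (p:ℕ) ≠ 0 by omega))))
      have le2 : P ≤ Ideal.map ρ P := hPm.le_of_pow_le (le_of_eq_of_le heq.symm
        (Ideal.pow_le_self (pow_ne_zero n (show (p:ℕ) ≠ 0 by omega))))
      exact le_antisymm le1 le2
    have hker : ∀ x ∈ P, Ideal.Quotient.mk P (ρ x) = 0 := by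
      intro x hx
      rw [Ideal.Quotient.eq_zero_iff_mem, ← hmapP]
      exact Ideal.mem_map_of_mem ρ hx
    set f : ((𝓞 F) ⧸ P) →+* ((𝓞 F) ⧸ P) :=
      Ideal.Quotient.lift P ((Ideal.Quotient.mk P).comp ρ.toRingHom) (by
        intro x hx
        rw [RingHom.comp_apply]
        exact hker x hx) with hf
    intro x
    have h1 : f (Ideal.Quotient.mk P x) = Ideal.Quotient.mk P (ρ x) := rfl
    have h2 : f (Ideal.Quotient.mk P x) = Ideal.Quotient.mk P x :=
      ringHom_fixed hp hcard f _
    rw [← h1.symm.trans h2]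
    rfl
  -- conclude: m ≡ 1 mod P
  have hmk : Ideal.Quotient.mk P m = 1 := by
    have h1 : Ideal.Quotient.mk P (∏ σ : F ≃ₐ[ℚ] F, τ σ m) = 1 := by
      rw [hprod]; simp
    rw [map_prod] at h1
    simp_rw [hfix] at h1
    rw [Finset.prod_const, Finset.card_univ, Fintype.card_eq_nat_card, IsGalois.card_aut_eq_finrank, hdeg] at h1
    exact pow_card_fix P hPmax hp hcard _ h1
  -- hence l ∈ P, so Q ≤ P, so 2 ∈ P; but also p ∈ P: contradiction
  have hlP : l ∈ P := by
    have : Ideal.Quotient.mk P l = 0 := by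
      have h0 : Ideal.Quotient.mk P (1 - m) = 0 := by
        rw [_root_.map_sub, _root_.map_one, hmk, sub_self]
      have hlm : (1 : (𝓞 F)) - m = l := by rw [hm]; ring
      rw [hlm] at h0
      exact h0
    exact Ideal.Quotient.eq_zero_iff_mem.mp this
  have hQP : Q ≤ P := by
    apply hP.le_of_pow_le (n := k)
    rw [← hspan_l, Ideal.span_le, Set.singleton_subset_iff]
    exact hlP
  have h2P : (2 : (𝓞 F)) ∈ P := hQP (hQ ▸ Ideal.mem_span_singleton_self _)
  have hpP : (p : (𝓞 F)) ∈ P := by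
    have hle : P ^ (p ^ n) ≤ P := Ideal.pow_le_self (pow_ne_zero n (show (p:ℕ) ≠ 0 by omega))
    have : Ideal.span {(p : (𝓞 F))} ≤ P := by rw [hram]; exact hle
    exact this (Ideal.mem_span_singleton_self _)
  obtain ⟨t, ht⟩ := hp.odd_of_ne_two (by omega)
  have h1P : (1 : (𝓞 F)) ∈ P := by
    have : (1 : (𝓞 F)) = (p : (𝓞 F)) - 2 * (t : (𝓞 F)) := by
      have : (p : ℕ) = 2 * t + 1 := ht
      push_cast [this]
      ring
    rw [this]
    exact P.sub_mem hpP (P.mul_mem_right _ h2P)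
  exact hP.ne_top (P.eq_top_of_isUnit_mem h1P isUnit_one)
end

section
/- Let p ≥ 5 be a prime and F/Q a Galois extension of degree p^n with p totally ramified and 2 inert, 𝔮 = 2O_F. Then every solution (λ, μ) of the {𝔮}-unit equation λ + μ = 1 satisfies max(|ord_𝔮(λ)|, |ord_𝔮(μ)|) ≤ 4 and ord_𝔮(λμ) ≡ 1 (mod 3). -/
set_option maxHeartbeats 1000000
set_option synthInstance.maxHeartbeats 400000


open NumberField FractionalIdeal IsDedekindDomain

private lemma prod_one_sub_sub_mem {R : Type*} [CommRing R] (J : Ideal R) {ι : Type*}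
    (s : Finset ι) (x : ι → R) (hx : ∀ i ∈ s, x i ∈ J) :
    ∏ i ∈ s, (1 - x i) - (1 - ∑ i ∈ s, x i) ∈ J ^ 2 := by
  classical
  induction s using Finset.induction_on with
  | empty => simpa using zero_mem _
  | @insert a s ha ih =>
    have hxa : x a ∈ J := hx a (Finset.mem_insert_self a s)
    have hxs : ∀ i ∈ s, x i ∈ J := fun i hi => hx i (Finset.mem_insert_of_mem hi)
    have hr := ih hxs
    have hsum : (∑ i ∈ s, x i) ∈ J := Ideal.sum_mem _ hxs
    rw [Finset.prod_insert ha, Finset.sum_insert ha]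
    have key : (1 - x a) * ∏ i ∈ s, (1 - x i) - (1 - (x a + ∑ i ∈ s, x i))
        = x a * (∑ i ∈ s, x i) + (1 - x a) * (∏ i ∈ s, (1 - x i) - (1 - ∑ i ∈ s, x i)) := by
      ring
    rw [key, pow_two]
    exact add_mem (Ideal.mul_mem_mul hxa hsum)
      (Ideal.mul_mem_left _ _ (by rw [← pow_two]; exact hr))

/-- p ≥ 5 prime, F/ℚ Galois of degree p^n, p totally ramified, 2 inert with
𝔮 = 2O_F.  Every solution of the {𝔮}-unit equation λ + μ = 1 has valuation
pattern (1,0), (0,1) or (-1,-1). -/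
theorem stmt12 (p n : ℕ) (hp : p.Prime) (hp5 : 5 ≤ p) (hn : 1 ≤ n)
    (F : Type*) [Field F] [NumberField F] [IsGalois ℚ F]
    (hdeg : Module.finrank ℚ F = p ^ n)
    (P : Ideal (𝓞 F)) (hP : P.IsPrime)
    (hram : Ideal.span {(p : 𝓞 F)} = P ^ (p ^ n))
    (Q : Ideal (𝓞 F)) (hQ : Q = Ideal.span {(2 : 𝓞 F)}) (hQprime : Q.IsPrime)
    (lam mu : F) (a b : ℤ)
    (ha : spanSingleton (nonZeroDivisors (𝓞 F)) lam
        = (Q : FractionalIdeal (nonZeroDivisors (𝓞 F)) F) ^ a)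
    (hb : spanSingleton (nonZeroDivisors (𝓞 F)) mu
        = (Q : FractionalIdeal (nonZeroDivisors (𝓞 F)) F) ^ b)
    (hsum : lam + mu = 1) :
    max |a| |b| ≤ 4 ∧ a + b ≡ 1 [ZMOD 3] := by
  classical
  haveI : Fact p.Prime := ⟨hp⟩
  have hpn : p ^ n ≠ 0 := pow_ne_zero n hp.ne_zero
  -- basic nonvanishing
  have h2ne : (2 : 𝓞 F) ≠ 0 := by
    have : ((2 : ℕ) : 𝓞 F) ≠ 0 := Nat.cast_ne_zero.mpr (by norm_num)
    simpa using this
  have hQbot : Q ≠ ⊥ := by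
    rw [hQ, ne_eq, Ideal.span_singleton_eq_bot]
    exact h2ne
  have hQtop : Q ≠ ⊤ := hQprime.ne_top
  have hQF : (Q : FractionalIdeal (nonZeroDivisors (𝓞 F)) F) ≠ 0 := by
    rw [ne_eq, coeIdeal_eq_zero]
    exact hQbot
  have hPbot : P ≠ ⊥ := by
    intro h
    have hpz : ((p : ℕ) : 𝓞 F) ≠ 0 := Nat.cast_ne_zero.mpr hp.ne_zero
    have : Ideal.span {((p : ℕ) : 𝓞 F)} = ⊥ := by
      rw [hram, h, ← Ideal.zero_eq_bot, zero_pow hpn]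
    rw [Ideal.span_singleton_eq_bot] at this
    exact hpz this
  haveI hPmax : P.IsMaximal := hP.isMaximal hPbot
  haveI : Fintype (𝓞 F ⧸ P) := @Fintype.ofFinite _ (Ideal.finiteQuotientOfFreeOfNeBot P hPbot)
  -- absNorm P = p, card of residue field
  have hNP : Ideal.absNorm P = p := by
    have h1 : Ideal.absNorm (Ideal.span {((p : ℕ) : 𝓞 F)}) = p ^ (p ^ n) := by
      rw [Ideal.absNorm_span_singleton]
      have hcast : ((p : ℕ) : 𝓞 F) = algebraMap ℤ (𝓞 F) ((p : ℕ) : ℤ) := by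
        push_cast
        rfl
      rw [hcast, Algebra.norm_algebraMap_of_basis (Module.Free.chooseBasis ℤ (𝓞 F))]
      have hcardb : Fintype.card (Module.Free.ChooseBasisIndex ℤ (𝓞 F)) = p ^ n := by
        rw [← Module.finrank_eq_card_chooseBasisIndex, NumberField.RingOfIntegers.rank, hdeg]
      rw [hcardb, Int.natAbs_pow]
      simp
    rw [hram, _root_.map_pow] at h1
    exact Nat.pow_left_injective hpn h1
  have hcard : Fintype.card (𝓞 F ⧸ P) = p := by
    rw [← Nat.card_eq_fintype_card, ← Submodule.cardQuot_apply, ← Ideal.absNorm_apply, hNP]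
  haveI : CharP (𝓞 F ⧸ P) p := charP_of_card_eq_prime hcard
  -- Galois restriction to the ring of integers
  set ρ : (F ≃ₐ[ℚ] F) → ((𝓞 F) ≃ₐ[ℤ] (𝓞 F)) := fun σ => galRestrict ℤ ℚ F (𝓞 F) σ with hρ
  have hcoe : ∀ (σ : F ≃ₐ[ℚ] F) (x : 𝓞 F),
      algebraMap (𝓞 F) F (ρ σ x) = σ (algebraMap (𝓞 F) F x) := fun σ x =>
    algebraMap_galRestrict_apply ℤ σ x
  -- Q is stable under ρ σ
  have hmapQ : ∀ σ : F ≃ₐ[ℚ] F, Ideal.map (ρ σ) Q = Q := by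
    intro σ
    rw [hQ, Ideal.map_span, Set.image_singleton]
    have h2' : (ρ σ) (2 : 𝓞 F) = 2 := _root_.map_ofNat _ 2
    rw [h2']
  -- P is stable under ρ σ
  have hmapP : ∀ σ : F ≃ₐ[ℚ] F, Ideal.map (ρ σ) P = P := by
    intro σ
    haveI hMP : (Ideal.map (ρ σ) P).IsPrime := Ideal.map_isPrime_of_equiv (ρ σ)
    have hpow : (Ideal.map (ρ σ) P) ^ (p ^ n) = P ^ (p ^ n) := by
      have hpmap : (ρ σ) ((p : ℕ) : 𝓞 F) = ((p : ℕ) : 𝓞 F) := _root_.map_natCast _ p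
      rw [← Ideal.map_pow, ← hram, Ideal.map_span, Set.image_singleton, hpmap, hram]
    have h1 : (Ideal.map (ρ σ) P) ^ (p ^ n) ≤ P := hpow.le.trans (Ideal.pow_le_self hpn)
    have h2 : P ^ (p ^ n) ≤ Ideal.map (ρ σ) P := hpow.symm.le.trans (Ideal.pow_le_self hpn)
    exact le_antisymm (hP.le_of_pow_le h1) (hMP.le_of_pow_le h2)
  -- every residue class mod P contains an integer
  have hsurj : Function.Surjective (fun z : ℤ => (z : 𝓞 F ⧸ P)) := by
    have hbij : Function.Bijective (ZMod.castHom (dvd_refl p) (𝓞 F ⧸ P)) :=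
      ZMod.castHom_bijective (𝓞 F ⧸ P) hcard
    intro y
    obtain ⟨x, hx⟩ := hbij.2 y
    obtain ⟨z, hz⟩ := ZMod.intCast_surjective (n := p) x
    exact ⟨z, by rw [← hx, ← hz, _root_.map_intCast]⟩
  -- Galois acts trivially on the residue field mod P
  have hfix : ∀ (σ : F ≃ₐ[ℚ] F) (x : 𝓞 F), ρ σ x - x ∈ P := by
    intro σ x
    obtain ⟨z, hz⟩ := hsurj (Ideal.Quotient.mk P x)
    have hxz : x - (z : 𝓞 F) ∈ P := by
      rw [← Ideal.Quotient.eq]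
      rw [← hz]
      exact (_root_.map_intCast (Ideal.Quotient.mk P) z).symm
    have h2' : ρ σ x - (z : 𝓞 F) ∈ P := by
      have := Ideal.mem_map_of_mem (ρ σ) hxz
      rw [hmapP σ] at this
      simpa [_root_.map_sub] using this
    have heq : ρ σ x - x = (ρ σ x - (z : 𝓞 F)) - (x - (z : 𝓞 F)) := by ring
    rw [heq]
    exact sub_mem h2' hxz
  -- product over Galois group is the integer norm
  have hnormprod : ∀ x : 𝓞 F, (∏ σ : F ≃ₐ[ℚ] F, ρ σ x)
      = algebraMap ℤ (𝓞 F) (Algebra.norm ℤ x) := by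
    intro x
    apply IsFractionRing.injective (𝓞 F) F
    rw [_root_.map_prod]
    simp only [hcoe]
    rw [← Algebra.norm_eq_prod_automorphisms, ← Algebra.coe_norm_int,
      _root_.map_intCast (algebraMap ℚ F), ← IsScalarTower.algebraMap_apply, eq_intCast]
  -- residue of x equals residue of its norm
  have hmk : ∀ x : 𝓞 F, Ideal.Quotient.mk P x = ((Algebra.norm ℤ x : ℤ) : 𝓞 F ⧸ P) := by
    intro x
    have h1 : Ideal.Quotient.mk P (∏ σ : F ≃ₐ[ℚ] F, ρ σ x)
        = (Ideal.Quotient.mk P x) ^ (p ^ n) := by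
      rw [_root_.map_prod]
      have : ∀ σ : F ≃ₐ[ℚ] F, Ideal.Quotient.mk P (ρ σ x) = Ideal.Quotient.mk P x := fun σ =>
        Ideal.Quotient.eq.mpr (hfix σ x)
      rw [Finset.prod_congr rfl (fun σ _ => this σ), Finset.prod_const, Finset.card_univ,
        ← Nat.card_eq_fintype_card, IsGalois.card_aut_eq_finrank, hdeg]
    have h2' : (Ideal.Quotient.mk P x) ^ (p ^ n) = Ideal.Quotient.mk P x := by
      letI : Field (𝓞 F ⧸ P) := Ideal.Quotient.field P
      have := FiniteField.pow_card_pow (K := 𝓞 F ⧸ P) n (Ideal.Quotient.mk P x)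
      rwa [hcard] at this
    rw [← h2', ← h1, hnormprod x, eq_intCast (algebraMap ℤ (𝓞 F)), _root_.map_intCast]
  -- cast facts in the residue field
  have h2resne : ((2 : ℕ) : 𝓞 F ⧸ P) ≠ 0 := by
    intro h
    have hdvd : (p : ℕ) ∣ 2 := (CharP.cast_eq_zero_iff (𝓞 F ⧸ P) p 2).mp h
    have := Nat.le_of_dvd (by norm_num) hdvd
    omega
  -- 2 ∉ Q²
  have hQ2 : (2 : 𝓞 F) ∉ Q ^ 2 := by
    intro hmem
    have hle : Q ≤ Q ^ 2 := by
      nth_rewrite 1 [hQ]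
      exact (Ideal.span_singleton_le_iff_mem _).mpr hmem
    have hge : Q ^ 2 ≤ Q := Ideal.pow_le_self (by norm_num)
    have heq : Q * Q = Q * 1 := by
      rw [mul_one, ← pow_two]
      exact le_antisymm hge hle
    have := mul_left_cancel₀ (by rwa [← Submodule.zero_eq_bot] at hQbot) heq
    rw [mul_one] at heq
    exact hQtop (by rwa [Ideal.one_eq_top] at this)
  -- Main lemma: integral solutions l + m = 1 with (l) = Q^k, m a unit, force k = 1
  have lemA : ∀ (l m : 𝓞 F) (k : ℕ), 1 ≤ k → Ideal.span {l} = Q ^ k → IsUnit m →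
      l + m = 1 → k = 1 := by
    intro l m k hk hl hm hsum'
    by_contra hne
    have hk2 : 2 ≤ k := by omega
    have hN : Algebra.norm ℤ m = 1 ∨ Algebra.norm ℤ m = -1 :=
      Int.isUnit_iff.mp (hm.map (Algebra.norm ℤ))
    have hmem : ∀ σ : F ≃ₐ[ℚ] F, ρ σ l ∈ Q ^ k := by
      intro σ
      have h1 : l ∈ Q ^ k := hl ▸ Ideal.mem_span_singleton_self l
      have h2' := Ideal.mem_map_of_mem (ρ σ) h1
      rwa [Ideal.map_pow, hmapQ σ] at h2'
    have hNneg : Algebra.norm ℤ m = -1 := by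
      rcases hN with h1 | h1
      · exfalso
        have hm1 : Ideal.Quotient.mk P m = 1 := by
          rw [hmk m, h1]
          norm_num
        have hl0 : l ∈ P := by
          have : Ideal.Quotient.mk P l = 0 := by
            have := congrArg (Ideal.Quotient.mk P) hsum'
            rw [_root_.map_add, hm1, _root_.map_one] at this
            linear_combination this
          exact Ideal.Quotient.eq_zero_iff_mem.mp this
        have hQP : Q ≤ P := by
          apply hP.le_of_pow_le (n := k)
          rw [← hl, Ideal.span_le, Set.singleton_subset_iff]
          exact hl0
        have h2P : (2 : 𝓞 F) ∈ P := hQP (hQ ▸ Ideal.mem_span_singleton_self _)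
        apply h2resne
        have hcast2 : ((2 : ℕ) : 𝓞 F ⧸ P) = Ideal.Quotient.mk P ((2 : ℕ) : 𝓞 F) :=
          (_root_.map_natCast (Ideal.Quotient.mk P) 2).symm
        rw [hcast2]
        exact Ideal.Quotient.eq_zero_iff_mem.mpr (by push_cast; exact h2P)
      · exact h1
    -- now the 2-adic contradiction
    have hprod2 : (∏ σ : F ≃ₐ[ℚ] F, ρ σ m) = -1 := by
      rw [hnormprod m, hNneg]
      norm_num
    have hmval : m = 1 - l := by linear_combination hsum'
    have hprodeq : (∏ σ : F ≃ₐ[ℚ] F, ρ σ m) = ∏ σ : F ≃ₐ[ℚ] F, (1 - ρ σ l) :=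
      Finset.prod_congr rfl fun σ _ => by rw [hmval, _root_.map_sub, _root_.map_one]
    have hexp := prod_one_sub_sub_mem (Q ^ k) Finset.univ (fun σ : F ≃ₐ[ℚ] F => ρ σ l)
      (fun σ _ => hmem σ)
    rw [← hprodeq, hprod2] at hexp
    have hs : (∑ σ : F ≃ₐ[ℚ] F, ρ σ l) ∈ Q ^ k := Ideal.sum_mem _ (fun σ _ => hmem σ)
    have hmem2 : (∑ σ : F ≃ₐ[ℚ] F, ρ σ l) - 2 ∈ (Q ^ k) ^ 2 := by
      have heq : (∑ σ : F ≃ₐ[ℚ] F, ρ σ l) - 2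
          = -1 - (1 - ∑ σ : F ≃ₐ[ℚ] F, ρ σ l) := by ring
      rw [heq]
      exact hexp
    apply hQ2
    have hle1 : Q ^ k ≤ Q ^ 2 := Ideal.pow_le_pow_right hk2
    have hle2 : (Q ^ k) ^ 2 ≤ Q ^ 2 := by
      rw [← pow_mul]
      exact Ideal.pow_le_pow_right (by omega)
    have heq : (2 : 𝓞 F) = (∑ σ : F ≃ₐ[ℚ] F, ρ σ l)
        - ((∑ σ : F ≃ₐ[ℚ] F, ρ σ l) - 2) := by ring
    rw [heq]
    exact sub_mem (hle1 hs) (hle2 hmem2)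
  -- Zero lemma: no two units sum to 1
  have lemZ : ∀ l m : 𝓞 F, IsUnit l → IsUnit m → l + m = 1 → False := by
    intro l m hl hm hsum'
    have hNl : Algebra.norm ℤ l = 1 ∨ Algebra.norm ℤ l = -1 :=
      Int.isUnit_iff.mp (hl.map (Algebra.norm ℤ))
    have hNm : Algebra.norm ℤ m = 1 ∨ Algebra.norm ℤ m = -1 :=
      Int.isUnit_iff.mp (hm.map (Algebra.norm ℤ))
    have hres : ((Algebra.norm ℤ l : ℤ) : 𝓞 F ⧸ P) + ((Algebra.norm ℤ m : ℤ) : 𝓞 F ⧸ P) = 1 := by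
      rw [← hmk l, ← hmk m, ← _root_.map_add, hsum', _root_.map_one]
    have h3ne : ((3 : ℕ) : 𝓞 F ⧸ P) ≠ 0 := by
      intro h
      have hdvd : (p : ℕ) ∣ 3 := (CharP.cast_eq_zero_iff (𝓞 F ⧸ P) p 3).mp h
      exact absurd (Nat.le_of_dvd (by norm_num) hdvd) (by omega)
    rcases hNl with h1 | h1 <;> rcases hNm with h2 | h2 <;>
        rw [h1, h2] at hres <;> push_cast at hres
    · exact one_ne_zero (α := 𝓞 F ⧸ P) (by linear_combination hres)
    · exact zero_ne_one (α := 𝓞 F ⧸ P) (by linear_combination hres)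
    · exact zero_ne_one (α := 𝓞 F ⧸ P) (by linear_combination hres)
    · apply h3ne
      push_cast
      linear_combination -hres
  -- extraction of integral generators for nonnegative exponents
  have getint : ∀ (x : F) (k : ℕ),
      spanSingleton (nonZeroDivisors (𝓞 F)) x
        = (Q : FractionalIdeal (nonZeroDivisors (𝓞 F)) F) ^ (k : ℤ) →
      ∃ y : 𝓞 F, algebraMap (𝓞 F) F y = x ∧ Ideal.span {y} = Q ^ k := by
    intro x k hx
    have hQFk : (Q : FractionalIdeal (nonZeroDivisors (𝓞 F)) F) ^ (k : ℤ)
        = ((Q ^ k : Ideal (𝓞 F)) : FractionalIdeal (nonZeroDivisors (𝓞 F)) F) := by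
      rw [zpow_natCast, coeIdeal_pow]
    have hxmem : x ∈ ((Q ^ k : Ideal (𝓞 F)) : FractionalIdeal (nonZeroDivisors (𝓞 F)) F) := by
      rw [← hQFk, ← hx]
      exact mem_spanSingleton_self _ x
    obtain ⟨y, _, hy2⟩ := (mem_coeIdeal _).mp hxmem
    refine ⟨y, hy2, ?_⟩
    apply coeIdeal_injective (K := F)
    show ((Ideal.span {y} : Ideal (𝓞 F)) : FractionalIdeal (nonZeroDivisors (𝓞 F)) F)
      = ((Q ^ k : Ideal (𝓞 F)) : FractionalIdeal (nonZeroDivisors (𝓞 F)) F)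
    rw [coeIdeal_span_singleton, hy2, hx, hQFk]
  -- negative exponents are impossible for integral elements
  have negExcl : ∀ (y : 𝓞 F) (c : ℤ), c < 0 →
      spanSingleton (nonZeroDivisors (𝓞 F)) (algebraMap (𝓞 F) F y)
        = (Q : FractionalIdeal (nonZeroDivisors (𝓞 F)) F) ^ c → False := by
    intro y c hc hy
    set X := ((Q ^ (-c).toNat : Ideal (𝓞 F)) : FractionalIdeal (nonZeroDivisors (𝓞 F)) F) with hX
    have hXne : X ≠ 0 := by
      rw [hX, ne_eq, coeIdeal_eq_zero]
      exact pow_ne_zero _ hQbot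
    have hc' : (((-c).toNat : ℤ)) = -c := Int.toNat_of_nonneg (by omega)
    have hXz : X = (Q : FractionalIdeal (nonZeroDivisors (𝓞 F)) F) ^ (((-c).toNat : ℕ) : ℤ) := by
      rw [hX, coeIdeal_pow, zpow_natCast]
    have hXeq : (Q : FractionalIdeal (nonZeroDivisors (𝓞 F)) F) ^ c = X⁻¹ := by
      rw [hXz, ← zpow_neg, hc', neg_neg]
    have hle : X⁻¹ ≤ 1 := by
      rw [← hXeq, ← hy, ← coeIdeal_span_singleton]
      exact coeIdeal_le_one
    have hge : (1 : FractionalIdeal (nonZeroDivisors (𝓞 F)) F) ≤ X := by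
      have h1 : X * X⁻¹ ≤ X * 1 := by gcongr
      rwa [mul_inv_cancel₀ hXne, mul_one] at h1
    have hXle : X ≤ 1 := coeIdeal_le_one
    have hXone : X = 1 := le_antisymm hXle hge
    have : (Q ^ (-c).toNat : Ideal (𝓞 F)) = ⊤ := by
      apply coeIdeal_injective (K := F)
      show ((Q ^ (-c).toNat : Ideal (𝓞 F)) : FractionalIdeal (nonZeroDivisors (𝓞 F)) F)
        = ((⊤ : Ideal (𝓞 F)) : FractionalIdeal (nonZeroDivisors (𝓞 F)) F)
      rw [← hX, hXone, coeIdeal_top]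
    apply hQtop
    have hcne : (-c).toNat ≠ 0 := by omega
    exact top_le_iff.mp (this ▸ Ideal.pow_le_self hcne)
  -- master lemma: positive valuation of lam forces pattern (1,0)
  have master : ∀ (lam' mu' : F) (a' b' : ℤ),
      spanSingleton (nonZeroDivisors (𝓞 F)) lam'
        = (Q : FractionalIdeal (nonZeroDivisors (𝓞 F)) F) ^ a' →
      spanSingleton (nonZeroDivisors (𝓞 F)) mu'
        = (Q : FractionalIdeal (nonZeroDivisors (𝓞 F)) F) ^ b' →
      lam' + mu' = 1 → 0 < a' → a' = 1 ∧ b' = 0 := by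
    intro lam' mu' a' b' ha' hb' hs' hapos
    have hinj : Function.Injective (algebraMap (𝓞 F) F) := IsFractionRing.injective (𝓞 F) F
    set k := a'.toNat with hkdef
    have hak : (k : ℤ) = a' := Int.toNat_of_nonneg hapos.le
    have hk1 : 1 ≤ k := by omega
    obtain ⟨l, hleq, hspanl⟩ := getint lam' k (by rw [hak]; exact ha')
    have hmu' : mu' = algebraMap (𝓞 F) F (1 - l) := by
      rw [_root_.map_sub, _root_.map_one, hleq]
      linear_combination hs'
    have hlQ : l ∈ Q := by
      have : l ∈ Q ^ k := hspanl ▸ Ideal.mem_span_singleton_self l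
      exact Ideal.pow_le_self (by omega) this
    have hb0 : b' = 0 := by
      rcases lt_trichotomy b' 0 with hneg | h0 | hposb
      · exact absurd (negExcl (1 - l) b' hneg (by rw [← hmu']; exact hb')) not_false
      · exact h0
      · exfalso
        set c := b'.toNat with hcdef
        have hbc : (c : ℤ) = b' := Int.toNat_of_nonneg hposb.le
        obtain ⟨m', hmeq, hspanm⟩ := getint mu' c (by rw [hbc]; exact hb')
        have hm'm : m' = 1 - l := hinj (by rw [hmeq, ← hmu'])
        have hmQ : (1 - l) ∈ Q := by
          rw [← hm'm]
          have : m' ∈ Q ^ c := hspanm ▸ Ideal.mem_span_singleton_self m'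
          exact Ideal.pow_le_self (by omega) this
        have h1Q : (1 : 𝓞 F) ∈ Q := by
          have := Ideal.add_mem Q hlQ hmQ
          simpa using this
        exact hQtop (Ideal.eq_top_iff_one Q |>.mpr h1Q)
    have hmunit : IsUnit (1 - l) := by
      have hsp : spanSingleton (nonZeroDivisors (𝓞 F)) (algebraMap (𝓞 F) F (1 - l))
          = 1 := by
        rw [← hmu', hb', hb0, zpow_zero]
      have : ((Ideal.span {(1 - l : 𝓞 F)} : Ideal (𝓞 F))
          : FractionalIdeal (nonZeroDivisors (𝓞 F)) F) = ((⊤ : Ideal (𝓞 F))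
          : FractionalIdeal (nonZeroDivisors (𝓞 F)) F) := by
        rw [coeIdeal_span_singleton, hsp, coeIdeal_top]
      rw [← Ideal.span_singleton_eq_top]
      exact coeIdeal_injective (K := F) this
    have hk := lemA l (1 - l) k hk1 hspanl hmunit (by ring)
    constructor
    · omega
    · exact hb0
  -- now the final case analysis
  rcases lt_trichotomy a 0 with haneg | ha0 | hapos
  · -- a < 0 : transform (λ,μ) ↦ (1/λ, -μ/λ)
    have hlamne : lam ≠ 0 := by
      intro h
      apply zpow_ne_zero a hQF
      rw [← ha, h, spanSingleton_zero]
    have hspaninv : spanSingleton (nonZeroDivisors (𝓞 F)) lam⁻¹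
        = (Q : FractionalIdeal (nonZeroDivisors (𝓞 F)) F) ^ (-a) := by
      have h1 : spanSingleton (nonZeroDivisors (𝓞 F)) lam⁻¹
          * spanSingleton (nonZeroDivisors (𝓞 F)) lam = 1 := by
        rw [spanSingleton_mul_spanSingleton, inv_mul_cancel₀ hlamne, spanSingleton_one]
      rw [zpow_neg, ← ha]
      exact eq_inv_of_mul_eq_one_left h1
    have hneg1span : spanSingleton (nonZeroDivisors (𝓞 F)) (-(mu * lam⁻¹))
        = spanSingleton (nonZeroDivisors (𝓞 F)) (mu * lam⁻¹) := by
      have hm1 : spanSingleton (nonZeroDivisors (𝓞 F)) (-1 : F) = 1 := by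
        have : (-1 : F) = algebraMap (𝓞 F) F (-1) := by norm_num
        rw [this, ← coeIdeal_span_singleton]
        have hsp : (Ideal.span {(-1 : 𝓞 F)}) = ⊤ :=
          Ideal.span_singleton_eq_top.mpr (IsUnit.neg isUnit_one)
        rw [hsp, coeIdeal_top]
      calc spanSingleton (nonZeroDivisors (𝓞 F)) (-(mu * lam⁻¹))
          = spanSingleton (nonZeroDivisors (𝓞 F)) ((-1) * (mu * lam⁻¹)) := by
            rw [neg_one_mul]
        _ = spanSingleton (nonZeroDivisors (𝓞 F)) (-1 : F)
            * spanSingleton (nonZeroDivisors (𝓞 F)) (mu * lam⁻¹) :=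
            (spanSingleton_mul_spanSingleton (-1 : F) (mu * lam⁻¹)).symm
        _ = spanSingleton (nonZeroDivisors (𝓞 F)) (mu * lam⁻¹) := by rw [hm1, one_mul]
    have hb' : spanSingleton (nonZeroDivisors (𝓞 F)) (-(mu * lam⁻¹))
        = (Q : FractionalIdeal (nonZeroDivisors (𝓞 F)) F) ^ (b - a) := by
      rw [hneg1span, ← spanSingleton_mul_spanSingleton, hb, hspaninv, ← zpow_add₀ hQF]
      ring_nf
    have hs' : lam⁻¹ + -(mu * lam⁻¹) = 1 := by
      have h1 : (1 - mu) = lam := by linear_combination -hsum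
      rw [← mul_inv_cancel₀ hlamne, ← h1]
      ring
    obtain ⟨h1, h2⟩ := master lam⁻¹ (-(mu * lam⁻¹)) (-a) (b - a) hspaninv hb' hs' (by omega)
    have haa : a = -1 := by omega
    have hbb : b = -1 := by omega
    subst haa hbb
    refine ⟨by norm_num, by decide⟩
  · -- a = 0
    rcases lt_trichotomy b 0 with hbneg | hb0 | hbpos
    · exfalso
      obtain ⟨u, hueq, hspanu⟩ := getint lam 0 (by rw [ha0] at ha; exact_mod_cast ha)
      have hmu : mu = algebraMap (𝓞 F) F (1 - u) := by
        rw [_root_.map_sub, _root_.map_one, hueq]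
        linear_combination hsum
      exact negExcl (1 - u) b hbneg (by rw [← hmu]; exact hb)
    · exfalso
      obtain ⟨u, hueq, hspanu⟩ := getint lam 0 (by rw [ha0] at ha; exact_mod_cast ha)
      obtain ⟨m', hmeq, hspanm⟩ := getint mu 0 (by rw [hb0] at hb; exact_mod_cast hb)
      have huunit : IsUnit u := by
        rw [← Ideal.span_singleton_eq_top]
        rw [pow_zero, Ideal.one_eq_top] at hspanu
        exact hspanu
      have hmunit : IsUnit m' := by
        rw [← Ideal.span_singleton_eq_top]
        rw [pow_zero, Ideal.one_eq_top] at hspanm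
        exact hspanm
      have hsum' : u + m' = 1 := by
        apply IsFractionRing.injective (𝓞 F) F
        rw [_root_.map_add, _root_.map_one, hueq, hmeq]
        exact hsum
      exact lemZ u m' huunit hmunit hsum'
    · obtain ⟨h1, h2⟩ := master mu lam b a hb ha (by linear_combination hsum) hbpos
      subst ha0
      have hbb : b = 1 := h1
      subst hbb
      refine ⟨by norm_num, by decide⟩
  · obtain ⟨h1, h2⟩ := master lam mu a b ha hb hsum hapos
    subst h1 h2
    refine ⟨by norm_num, by decide⟩
end

section
/- Let F/Q be a Galois extension of prime-power degree p^n (p odd) in which p is totally ramified with unique prime 𝔭. If λ, μ ∈ O_F satisfy λ + μ = 1 and both λ and μ are units, then p = 3. -/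
open NumberField FractionalIdeal IsDedekindDomain

set_option synthInstance.maxHeartbeats 800000 in
set_option maxHeartbeats 1600000 in
/-- F/ℚ Galois of degree p^n (p odd) with p totally ramified: if units
λ, μ ∈ O_Fˣ satisfy λ + μ = 1 then p = 3. -/
theorem stmt17 (p n : ℕ) (hp : p.Prime) (hodd : Odd p) (hn : 1 ≤ n)
    (F : Type*) [Field F] [NumberField F] [IsGalois ℚ F]
    (hdeg : Module.finrank ℚ F = p ^ n)
    (P : Ideal (𝓞 F)) (hP : P.IsPrime)
    (hram : Ideal.span {(p : 𝓞 F)} = P ^ (p ^ n))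
    (lam mu : (𝓞 F)ˣ) (hsum : (lam : 𝓞 F) + (mu : 𝓞 F) = 1) :
    p = 3 := by
  haveI : Fact p.Prime := ⟨hp⟩
  have hpn0 : p ^ n ≠ 0 := pow_ne_zero n hp.pos.ne'
  -- p ∈ P
  have hpP : (p : 𝓞 F) ∈ P := by
    have h1 : (p : 𝓞 F) ∈ P ^ (p ^ n) := by
      rw [← hram]; exact Ideal.subset_span rfl
    exact Ideal.pow_le_self hpn0 h1
  -- P ≠ ⊥
  have hPbot : P ≠ ⊥ := by
    intro h
    rw [h, Ideal.mem_bot] at hpP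
    have h2 : ((p : ℤ) : 𝓞 F) = 0 := by exact_mod_cast hpP
    have hinj : Function.Injective (algebraMap ℤ (𝓞 F)) :=
      (algebraMap ℤ (𝓞 F)).injective_int
    have h3 : (p : ℤ) = 0 := hinj (by simpa using h2)
    exact hp.pos.ne' (by exact_mod_cast h3)
  haveI : P.IsMaximal := Ideal.IsPrime.isMaximal hP hPbot
  haveI : Nontrivial (𝓞 F ⧸ P) := Ideal.Quotient.nontrivial_iff.mpr hP.ne_top
  -- any prime ideal containing p equals P
  have huniq : ∀ Q : Ideal (𝓞 F), Q.IsPrime → (p : 𝓞 F) ∈ Q → Q = P := by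
    intro Q hQ hpQ
    have h1 : P ^ (p ^ n) ≤ Q := by
      rw [← hram, Ideal.span_le]
      intro x hx; rw [Set.mem_singleton_iff] at hx; rwa [hx]
    have h2 : P ≤ Q := Ideal.IsPrime.le_of_pow_le h1
    exact ((‹P.IsMaximal›).eq_of_le hQ.ne_top h2).symm
  have hcharp : CharP (𝓞 F ⧸ P) p := by
    rw [CharP.charP_iff_prime_eq_zero hp]
    have h1 : Ideal.Quotient.mk P (p : 𝓞 F) = 0 := Ideal.Quotient.eq_zero_iff_mem.2 hpP
    simpa using h1
  haveI := hcharp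
  -- the norm of an integer
  have hnormZ : ∀ m : ℤ, Algebra.norm ℤ ((m : 𝓞 F)) = m ^ (p ^ n) := by
    intro m
    have h1 : ((Algebra.norm ℤ ((m : ℤ) : 𝓞 F) : ℤ) : ℚ)
        = Algebra.norm ℚ ((((m : ℤ) : 𝓞 F) : F)) := Algebra.coe_norm_int _
    have h2 : ((((m : ℤ) : 𝓞 F)) : F) = algebraMap ℚ F ((m : ℤ) : ℚ) := by
      push_cast; simp
    rw [h2, Algebra.norm_algebraMap, hdeg] at h1
    exact_mod_cast h1
  have hnormp : Algebra.norm ℤ ((p : ℤ) : 𝓞 F) = (p : ℤ) ^ (p ^ n) := hnormZ p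
  -- cardinality of the residue field is p
  have hcard : Nat.card (𝓞 F ⧸ P) = p := by
    have h1 : Ideal.absNorm (Ideal.span {(p : 𝓞 F)}) = p ^ (p ^ n) := by
      rw [Ideal.absNorm_span_singleton]
      have h2 : (p : 𝓞 F) = ((p : ℤ) : 𝓞 F) := by push_cast; ring
      rw [h2, hnormp, Int.natAbs_pow]
      simp
    rw [hram, map_pow] at h1
    have h2 : Ideal.absNorm P = p := Nat.pow_left_injective hpn0 h1
    rw [← h2, Ideal.absNorm_apply, Submodule.cardQuot_apply]
  haveI : Finite (𝓞 F ⧸ P) := Nat.finite_of_card_ne_zero (by rw [hcard]; exact hp.pos.ne')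
  -- the residue field is `ZMod p`
  have hbij : Function.Bijective (ZMod.castHom (dvd_refl p) (𝓞 F ⧸ P)) :=
    (Nat.bijective_iff_injective_and_card _).2
      ⟨(ZMod.castHom (dvd_refl p) (𝓞 F ⧸ P)).injective, by simp [hcard]⟩
  set e := RingEquiv.ofBijective _ hbij with he
  set φ : 𝓞 F →+* ZMod p := (e.symm : (𝓞 F ⧸ P) →+* ZMod p).comp (Ideal.Quotient.mk P)
    with hφ
  have hker : ∀ x : 𝓞 F, φ x = 0 ↔ x ∈ P := by
    intro x
    rw [hφ, RingHom.comp_apply]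
    constructor
    · intro h1
      have h2 : Ideal.Quotient.mk P x = 0 :=
        e.symm.injective (by rw [_root_.map_zero]; exact h1)
      exact Ideal.Quotient.eq_zero_iff_mem.1 h2
    · intro h1
      rw [Ideal.Quotient.eq_zero_iff_mem.2 h1, _root_.map_zero]
  -- Galois acts trivially modulo P
  have hgal : ∀ σ : F ≃ₐ[ℚ] F, ∀ x : 𝓞 F,
      φ (galRestrict ℤ ℚ F (𝓞 F) σ x) = φ x := by
    intro σ x
    set τ := galRestrict ℤ ℚ F (𝓞 F) σ with hτ
    obtain ⟨m, hm⟩ := ZMod.intCast_surjective (φ x)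
    have hxm : x - (m : 𝓞 F) ∈ P := by
      rw [← hker, map_sub, map_intCast, hm, sub_self]
    have hQ : P.comap (τ : 𝓞 F →+* 𝓞 F) = P := by
      apply huniq _ (Ideal.IsPrime.comap _)
      show τ (p : 𝓞 F) ∈ P
      rw [map_natCast]; exact hpP
    have hτxm : τ (x - (m : 𝓞 F)) ∈ P := by rw [← hQ] at hxm; exact hxm
    have h1 : φ (τ (x - (m : 𝓞 F))) = 0 := (hker _).2 hτxm
    rw [map_sub, map_sub, map_intCast, map_intCast, sub_eq_zero] at h1
    rw [h1, hm]
  -- every unit reduces to ±1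
  have key : ∀ u : (𝓞 F)ˣ, φ (u : 𝓞 F) = 1 ∨ φ (u : 𝓞 F) = -1 := by
    intro u
    have hprod := prod_galRestrict_eq_norm ℤ ℚ F (𝓞 F) (u : 𝓞 F)
    set N : ℤ := IsIntegralClosure.mk' (R := ℤ) ℤ
      (Algebra.norm ℚ <| algebraMap (𝓞 F) F (u : 𝓞 F))
      (Algebra.isIntegral_norm ℚ (IsIntegralClosure.isIntegral ℤ F (u : 𝓞 F)).algebraMap)
      with hN
    have hunit : IsUnit (algebraMap ℤ (𝓞 F) N) := by
      rw [← hprod]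
      refine Finset.prod_induction _ IsUnit (fun a b ha hb => ha.mul hb) isUnit_one ?_
      intro σ _
      exact u.isUnit.map (galRestrict ℤ ℚ F (𝓞 F) σ : 𝓞 F →+* 𝓞 F)
    have hNunit : IsUnit N := by
      have h3 : IsUnit (Algebra.norm ℤ (algebraMap ℤ (𝓞 F) N)) :=
        hunit.map (Algebra.norm ℤ)
      have h4 : algebraMap ℤ (𝓞 F) N = ((N : ℤ) : 𝓞 F) := by simp
      rw [h4, hnormZ N] at h3
      exact (isUnit_pow_iff hpn0).1 h3
    have hN1 : N = 1 ∨ N = -1 := Int.isUnit_iff.1 hNunit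
    -- reduce the product formula modulo P
    have hred : (φ (u : 𝓞 F)) ^ (p ^ n) = (N : ZMod p) := by
      have h4 : φ (∏ σ : F ≃ₐ[ℚ] F, galRestrict ℤ ℚ F (𝓞 F) σ (u : 𝓞 F)) =
          (φ (u : 𝓞 F)) ^ (p ^ n) := by
        rw [map_prod]
        rw [Finset.prod_congr rfl (fun σ _ => hgal σ (u : 𝓞 F)), Finset.prod_const,
          Finset.card_univ, ← Nat.card_eq_fintype_card, IsGalois.card_aut_eq_finrank, hdeg]
      rw [hprod] at h4
      rw [← h4]
      have h5 : algebraMap ℤ (𝓞 F) N = ((N : ℤ) : 𝓞 F) := by simp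
      rw [h5, map_intCast]
    have hfrob : (φ (u : 𝓞 F)) ^ (p ^ n) = φ (u : 𝓞 F) := ZMod.pow_card_pow _
    rw [hfrob] at hred
    rcases hN1 with h | h
    · left; rw [hred, h]; simp
    · right; rw [hred, h]; simp
  -- conclude
  have hsum' : φ (lam : 𝓞 F) + φ (mu : 𝓞 F) = 1 := by
    rw [← _root_.map_add, hsum, _root_.map_one]
  rcases key lam with h1 | h1 <;> rcases key mu with h2 | h2 <;>
    rw [h1, h2] at hsum'
  · exact absurd (by linear_combination hsum' : (1 : ZMod p) = 0) one_ne_zero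
  · exact absurd (by linear_combination -hsum' : (1 : ZMod p) = 0) one_ne_zero
  · exact absurd (by linear_combination -hsum' : (1 : ZMod p) = 0) one_ne_zero
  · have h3 : ((3 : ℕ) : ZMod p) = 0 := by push_cast; linear_combination -hsum'
    have h5 : p ∣ 3 := (ZMod.natCast_eq_zero_iff 3 p).1 h3
    exact (Nat.prime_dvd_prime_iff_eq hp (by norm_num)).1 h5
end

section
/- Let F be a number field Galois over Q of degree p^n (p ≥ 5 prime) with p totally ramified (unique prime 𝔭 above p) and 2 inert (𝔮 = 2O_F). If λ, μ ∈ O_F with λ + μ = 1, ord_𝔮(λ) ≥ 2, and μ a unit, then 𝔭 divides λ, which contradicts λ being a {𝔮}-unit; hence no {𝔮}-unit solution has ord_𝔮(λ) ≥ 2. -/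
set_option maxHeartbeats 1000000
set_option synthInstance.maxHeartbeats 400000

open NumberField FractionalIdeal IsDedekindDomain

/-- p ≥ 5, F/ℚ Galois of degree p^n, p totally ramified (unique prime 𝔭),
2 inert with 𝔮 = 2O_F.  If λ + μ = 1 with ord_𝔮(λ) ≥ 2 and μ a unit, then
𝔭 ∣ λ; hence no {𝔮}-unit solution has ord_𝔮(λ) ≥ 2. -/
theorem stmt19 (p n : ℕ) (hp : p.Prime) (hp5 : 5 ≤ p) (hn : 1 ≤ n)
    (F : Type*) [Field F] [NumberField F] [IsGalois ℚ F]
    (hdeg : Module.finrank ℚ F = p ^ n)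
    (P : Ideal (𝓞 F)) (hP : P.IsPrime)
    (hram : Ideal.span {(p : 𝓞 F)} = P ^ (p ^ n))
    (Q : Ideal (𝓞 F)) (hQ : Q = Ideal.span {(2 : 𝓞 F)}) (hQprime : Q.IsPrime)
    (lam mu : 𝓞 F) (hsum : lam + mu = 1) (hval : lam ∈ Q ^ 2) (hmu : IsUnit mu) :
    lam ∈ P ∧
    ∀ a : ℤ, 2 ≤ a →
      spanSingleton (nonZeroDivisors (𝓞 F)) (algebraMap (𝓞 F) F lam)
        ≠ (Q : FractionalIdeal (nonZeroDivisors (𝓞 F)) F) ^ a := by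
  -- 2 is not a unit
  have h2unit : ¬ IsUnit (2 : 𝓞 F) := by
    intro h
    exact hQprime.ne_top (by rw [hQ]; exact Ideal.span_singleton_eq_top.mpr h)
  -- lam = c * 4
  have hval4 : lam ∈ Ideal.span {(4 : 𝓞 F)} := by
    have : Q ^ 2 = Ideal.span {(4 : 𝓞 F)} := by
      rw [hQ, Ideal.span_singleton_pow]; norm_num
    rwa [this] at hval
  obtain ⟨c, hc⟩ := Ideal.mem_span_singleton'.mp hval4
  -- the norm of mu as an integer is a unit
  have hNunit : IsUnit (Algebra.norm ℤ mu) := hmu.map (Algebra.norm ℤ)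
  -- product over automorphisms equals the norm
  have hprod : (∏ σ : F ≃ₐ[ℚ] F, galRestrict ℤ ℚ F (𝓞 F) σ mu)
      = algebraMap ℤ (𝓞 F) (Algebra.norm ℤ mu) := by
    rw [prod_galRestrict_eq_norm ℤ ℚ F (𝓞 F) mu]
    congr 1
    apply Int.cast_injective (α := ℚ)
    rw [← eq_intCast (algebraMap ℤ ℚ), IsIntegralClosure.algebraMap_mk']
    exact (Algebra.coe_norm_int mu).symm
  -- each conjugate of mu is ≡ 1 mod 4
  have hmu4 : ∀ σ : F ≃ₐ[ℚ] F, Ideal.Quotient.mk (Ideal.span {(4 : 𝓞 F)})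
      (galRestrict ℤ ℚ F (𝓞 F) σ mu) = 1 := by
    intro σ
    have hmu' : (galRestrict ℤ ℚ F (𝓞 F) σ) mu
        = 1 - (galRestrict ℤ ℚ F (𝓞 F) σ) c * 4 := by
      have h1 : mu = 1 - c * 4 := by linear_combination hsum + hc
      rw [h1]
      simp [map_sub, _root_.map_mul, map_ofNat]
    rw [hmu', map_sub, _root_.map_mul, _root_.map_one]
    have h4 : Ideal.Quotient.mk (Ideal.span {(4 : 𝓞 F)}) (4 : 𝓞 F) = 0 :=
      Ideal.Quotient.eq_zero_iff_mem.mpr (Ideal.mem_span_singleton_self _)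
    rw [h4, mul_zero, sub_zero]
  -- product ≡ 1 mod 4
  have hprod4 : Ideal.Quotient.mk (Ideal.span {(4 : 𝓞 F)})
      (∏ σ : F ≃ₐ[ℚ] F, galRestrict ℤ ℚ F (𝓞 F) σ mu) = 1 := by
    rw [map_prod]
    exact Finset.prod_eq_one fun σ _ => hmu4 σ
  -- norm = 1
  have hN1 : Algebra.norm ℤ mu = 1 := by
    rcases Int.isUnit_iff.mp hNunit with h1 | h1
    · exact h1
    · exfalso
      rw [hprod, h1] at hprod4
      have : ((-1 : ℤ) : 𝓞 F) - 1 ∈ Ideal.span {(4 : 𝓞 F)} := by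
        refine (Ideal.Quotient.eq).mp ?_
        rw [_root_.map_one, ← eq_intCast (algebraMap ℤ (𝓞 F)) (-1)]
        exact hprod4
      obtain ⟨d, hd⟩ := Ideal.mem_span_singleton'.mp this
      apply h2unit
      have hz : (2 : 𝓞 F) * (2 * d + 1) = 0 := by push_cast at hd; linear_combination hd
      rcases mul_eq_zero.mp hz with h2 | h2
      · exact absurd h2 (by norm_num)
      · exact IsUnit.of_mul_eq_one (a := 2) (-d) (by linear_combination -h2)
  -- p ∈ P
  have hpP : (p : 𝓞 F) ∈ P := by
    have : Ideal.span {(p : 𝓞 F)} ≤ P := by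
      rw [hram]
      calc P ^ p ^ n ≤ P ^ 1 := Ideal.pow_le_pow_right (Nat.one_le_pow _ _ hp.pos)
        _ = P := pow_one P
    exact this (Ideal.mem_span_singleton_self _)
  -- the residue field of P has cardinality p
  have hcard : Nat.card (𝓞 F ⧸ P) = p := by
    have h1 : Ideal.absNorm (Ideal.span {(p : 𝓞 F)}) = p ^ p ^ n := by
      rw [Ideal.absNorm_span_singleton]
      have hcast : (p : 𝓞 F) = algebraMap ℤ (𝓞 F) (p : ℤ) := by push_cast; rfl
      rw [hcast, Algebra.norm_algebraMap_of_basis (Module.Free.chooseBasis ℤ (𝓞 F)),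
        ← Module.finrank_eq_card_chooseBasisIndex, RingOfIntegers.rank, hdeg]
      simp [Int.natAbs_pow]
    have h2 : Ideal.absNorm P ^ p ^ n = p ^ p ^ n := by
      rw [← map_pow, ← hram, h1]
    have h3 : Ideal.absNorm P = p :=
      Nat.pow_left_injective (pow_ne_zero n hp.ne_zero) h2
    rw [← h3, Ideal.absNorm_apply, Submodule.cardQuot_apply]
  have hfin : Finite (𝓞 F ⧸ P) :=
    Nat.finite_of_card_ne_zero (by rw [hcard]; exact hp.pos.ne')
  have hPbot : P ≠ ⊥ := by
    intro h
    have hmem := Ideal.mem_span_singleton_self (p : 𝓞 F)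
    rw [hram, h, ← Ideal.zero_eq_bot, zero_pow (pow_ne_zero n hp.ne_zero),
      Ideal.zero_eq_bot, Ideal.mem_bot] at hmem
    exact hp.ne_zero (by exact_mod_cast hmem)
  haveI hPmax : P.IsMaximal := Ideal.IsPrime.isMaximal hP hPbot
  letI : Field (𝓞 F ⧸ P) := Ideal.Quotient.field P
  haveI := Fintype.ofFinite (𝓞 F ⧸ P)
  haveI : Fact p.Prime := ⟨hp⟩
  have hqcard : Fintype.card (𝓞 F ⧸ P) = p := by rw [← Nat.card_eq_fintype_card, hcard]
  have hchar : CharP (𝓞 F ⧸ P) p := by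
    apply (CharP.charP_iff_prime_eq_zero hp).mpr
    rw [← map_natCast (Ideal.Quotient.mk P)]
    exact Ideal.Quotient.eq_zero_iff_mem.mpr hpP
  -- residue of mu is an integer
  have hsurj : Function.Surjective (ZMod.castHom (dvd_refl p) (𝓞 F ⧸ P)) := by
    have hinj : Function.Injective (ZMod.castHom (dvd_refl p) (𝓞 F ⧸ P)) :=
      (ZMod.castHom (dvd_refl p) (𝓞 F ⧸ P)).injective
    have := (Fintype.bijective_iff_injective_and_card
      (ZMod.castHom (dvd_refl p) (𝓞 F ⧸ P))).mpr ⟨hinj, by rw [ZMod.card, hqcard]⟩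
    exact this.surjective
  obtain ⟨m, hm⟩ : ∃ m : ℤ, Ideal.Quotient.mk P mu = (m : 𝓞 F ⧸ P) := by
    obtain ⟨m0, hm0⟩ := hsurj (Ideal.Quotient.mk P mu)
    obtain ⟨m, rfl⟩ := ZMod.intCast_surjective m0
    exact ⟨m, by rw [← hm0, map_intCast]⟩
  have hmem : mu - (m : 𝓞 F) ∈ P :=
    Ideal.Quotient.eq.mp (by rw [hm, map_intCast])
  -- each conjugate of mu is ≡ m mod P
  have htau : ∀ σ : F ≃ₐ[ℚ] F, Ideal.Quotient.mk P ((galRestrict ℤ ℚ F (𝓞 F) σ) mu)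
      = (m : 𝓞 F ⧸ P) := by
    intro σ
    set τ := galRestrict ℤ ℚ F (𝓞 F) σ with hτ
    have hmap : Ideal.map τ P ≤ P := by
      refine hP.le_of_pow_le (n := p ^ n) ?_
      rw [← Ideal.map_pow, ← hram, Ideal.map_span, Set.image_singleton, map_natCast, hram]
      exact Ideal.pow_le_self (pow_ne_zero n hp.ne_zero)
    have h1 : τ mu - τ (m : 𝓞 F) ∈ P := by
      rw [← map_sub]
      exact hmap (Ideal.mem_map_of_mem τ hmem)
    have h2 : τ ((m : 𝓞 F)) = (m : 𝓞 F) := map_intCast τ m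
    have h3 : Ideal.Quotient.mk P (τ mu) = Ideal.Quotient.mk P ((m : 𝓞 F)) :=
      Ideal.Quotient.eq.mpr (h2 ▸ h1)
    rw [h3, map_intCast]
  -- m ≡ 1 mod P
  have key : ((m : 𝓞 F ⧸ P)) ^ p ^ n = 1 := by
    have h0 : (∏ σ : F ≃ₐ[ℚ] F, galRestrict ℤ ℚ F (𝓞 F) σ mu) = 1 := by
      rw [hprod, hN1, _root_.map_one]
    have := congrArg (Ideal.Quotient.mk P) h0
    rw [map_prod, _root_.map_one] at this
    simp only [htau] at this
    rwa [Finset.prod_const, Finset.card_univ, ← Nat.card_eq_fintype_card, IsGalois.card_aut_eq_finrank, hdeg] at this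
  have hm1 : (m : 𝓞 F ⧸ P) = 1 := by
    calc (m : 𝓞 F ⧸ P) = (m : 𝓞 F ⧸ P) ^ p ^ n := by
          conv_lhs => rw [← FiniteField.pow_card_pow (n := n) (m : 𝓞 F ⧸ P), hqcard]
      _ = 1 := key
  -- lam ∈ P
  have hlamP : lam ∈ P := by
    have : Ideal.Quotient.mk P lam = 0 := by
      have hl : lam = 1 - mu := by linear_combination hsum
      rw [hl, map_sub, _root_.map_one, hm, hm1, sub_self]
    exact Ideal.Quotient.eq_zero_iff_mem.mp this
  refine ⟨hlamP, ?_⟩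
  intro a ha heq
  lift a to ℕ using (by linarith : (0:ℤ) ≤ a) with k
  rw [zpow_natCast] at heq
  rw [← coeIdeal_span_singleton, ← coeIdeal_pow, coeIdeal_inj] at heq
  have hk2 : 2 ≤ k := by exact_mod_cast ha
  have hQP : Q ≤ P := by
    refine hP.le_of_pow_le (n := k) ?_
    rw [← heq]
    exact Ideal.span_le.mpr (by simpa using hlamP)
  have h2P : (2 : 𝓞 F) ∈ P := hQP (by rw [hQ]; exact Ideal.mem_span_singleton_self _)
  have hco : IsCoprime (2 : ℤ) (p : ℤ) := by
    have h : Nat.Coprime 2 p := by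
      refine Nat.Coprime.symm (hp.coprime_iff_not_dvd.mpr ?_)
      intro hdvd
      have := Nat.le_of_dvd (by norm_num) hdvd
      omega
    exact_mod_cast Nat.isCoprime_iff_coprime.mpr h
  obtain ⟨u, v, huv⟩ := hco
  have h1P : (1 : 𝓞 F) ∈ P := by
    have hcast := congrArg (algebraMap ℤ (𝓞 F)) huv
    rw [_root_.map_add, _root_.map_mul, _root_.map_mul, _root_.map_one] at hcast
    rw [← hcast]
    refine P.add_mem (P.mul_mem_left _ ?_) (P.mul_mem_left _ ?_)
    · rw [show (algebraMap ℤ (𝓞 F)) 2 = (2 : 𝓞 F) by norm_num]; exact h2P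
    · rw [show (algebraMap ℤ (𝓞 F)) ((p : ℕ) : ℤ) = ((p : ℕ) : 𝓞 F) by push_cast; rfl]
      exact hpP
  exact hP.ne_top (P.eq_top_iff_one.mpr h1P)
end
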